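/- arXiv:2012.13105 — 5 statements merged into one kernel-verified Lean document; each statement's English description precedes it below -/
import Mathlib

section
/- Error representation of the first-order standard Trotter formula: for every h ≥ 0 one has U_{s,1}(h,0) - U(h,0) = ∫₀^h U(h,s) · exp(-i s f2(s) H2) · E_{s,1}(s) · exp(-i s f1(s) H1) ds, where for r ≥ 0, E_{s,1}(r) = ∫₀^r f1(r) f2(s) · exp(i s f2(s) H2) [H1,H2] exp(-i s f2(s) H2) ds - i r f1'(r) H1 - i r f2'(r) H2 + ∫₀^r s f1(r) f2'(s) · exp(i s f2(s) H2) [H1,H2] exp(-i s f2(s) H2) ds. -/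
open scoped Matrix.Norms.L2Operator
open MeasureTheory

noncomputable section

/-- Square `n × n` complex matrices. -/
abbrev Mat (n : ℕ) := Matrix (Fin n) (Fin n) ℂ

/-- The matrix exponential. -/
noncomputable def mexp {n : ℕ} (A : Mat n) : Mat n := NormedSpace.exp A

/-- The commutator `[A,B] = AB - BA`. -/
def matComm {n : ℕ} (A B : Mat n) : Mat n := A * B - B * A

/-- The time-dependent Hamiltonian `H(t) = f1(t) H1 + f2(t) H2`. -/
def Ham {n : ℕ} (H1 H2 : Mat n) (f1 f2 : ℝ → ℝ) (t : ℝ) : Mat n :=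
  (f1 t : ℂ) • H1 + (f2 t : ℂ) • H2

/-- `IsEvolution H1 H2 f1 f2 U` : `U t s` is the evolution operator, i.e. it solves
`∂ₜ U(t,s) = -i H(t) U(t,s)` with `U(s,s) = I`. -/
def IsEvolution {n : ℕ} (H1 H2 : Mat n) (f1 f2 : ℝ → ℝ) (U : ℝ → ℝ → Mat n) : Prop :=
  (∀ s : ℝ, U s s = 1) ∧
    ∀ s t : ℝ, HasDerivAt (fun τ => U τ s) ((-Complex.I) • (Ham H1 H2 f1 f2 t * U t s)) t

/-- First-order standard Trotter step from time `a` to time `b`: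
`U_{s,1}(b,a) = exp(-i (b-a) f2(b) H2) exp(-i (b-a) f1(b) H1)`. -/
noncomputable def Us1 {n : ℕ} (H1 H2 : Mat n) (f1 f2 : ℝ → ℝ) (b a : ℝ) : Mat n :=
  mexp ((-Complex.I * (((b - a) * f2 b : ℝ) : ℂ)) • H2) *
    mexp ((-Complex.I * (((b - a) * f1 b : ℝ) : ℂ)) • H1)

/-- First-order generalized Trotter step from time `a` to time `b`:
`U_{g,1}(b,a) = exp(-i (∫_a^b f2) H2) exp(-i (∫_a^b f1) H1)`. -/
noncomputable def Ug1 {n : ℕ} (H1 H2 : Mat n) (f1 f2 : ℝ → ℝ) (b a : ℝ) : Mat n :=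
  mexp ((-Complex.I * ((∫ s in a..b, f2 s : ℝ) : ℂ)) • H2) *
    mexp ((-Complex.I * ((∫ s in a..b, f1 s : ℝ) : ℂ)) • H1)

/-- Second-order standard Trotter step from time `a` to time `b` (with midpoint `(a+b)/2`):
`U_{s,2}(b,a) = exp(-i (b-a)/2 f1((a+b)/2) H1) exp(-i (b-a) f2((a+b)/2) H2)
  exp(-i (b-a)/2 f1((a+b)/2) H1)`. -/
noncomputable def Us2 {n : ℕ} (H1 H2 : Mat n) (f1 f2 : ℝ → ℝ) (b a : ℝ) : Mat n :=
  mexp ((-Complex.I * (((b - a) / 2 * f1 ((a + b) / 2) : ℝ) : ℂ)) • H1) *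
    mexp ((-Complex.I * (((b - a) * f2 ((a + b) / 2) : ℝ) : ℂ)) • H2) *
    mexp ((-Complex.I * (((b - a) / 2 * f1 ((a + b) / 2) : ℝ) : ℂ)) • H1)

/-- Second-order generalized Trotter step from time `a` to time `b`:
`U_{g,2}(b,a) = exp(-i (∫_{(a+b)/2}^b f1) H1) exp(-i (∫_a^b f2) H2)
  exp(-i (∫_a^{(a+b)/2} f1) H1)`. -/
noncomputable def Ug2 {n : ℕ} (H1 H2 : Mat n) (f1 f2 : ℝ → ℝ) (b a : ℝ) : Mat n :=
  mexp ((-Complex.I * ((∫ s in ((a + b) / 2)..b, f1 s : ℝ) : ℂ)) • H1) *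
    mexp ((-Complex.I * ((∫ s in a..b, f2 s : ℝ) : ℂ)) • H2) *
    mexp ((-Complex.I * ((∫ s in a..((a + b) / 2), f1 s : ℝ) : ℂ)) • H1)

/-- The integrand appearing in the error representation of the first-order standard Trotter
formula. -/
noncomputable def Es1 {n : ℕ} (H1 H2 : Mat n) (f1 f2 : ℝ → ℝ) (r : ℝ) : Mat n :=
  (∫ s in (0:ℝ)..r, ((f1 r * f2 s : ℝ) : ℂ) •
      (mexp ((Complex.I * ((s * f2 s : ℝ) : ℂ)) • H2) * matComm H1 H2 *
        mexp ((-Complex.I * ((s * f2 s : ℝ) : ℂ)) • H2)))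
    - (Complex.I * ((r * deriv f1 r : ℝ) : ℂ)) • H1
    - (Complex.I * ((r * deriv f2 r : ℝ) : ℂ)) • H2
    + ∫ s in (0:ℝ)..r, ((s * f1 r * deriv f2 s : ℝ) : ℂ) •
      (mexp ((Complex.I * ((s * f2 s : ℝ) : ℂ)) • H2) * matComm H1 H2 *
        mexp ((-Complex.I * ((s * f2 s : ℝ) : ℂ)) • H2))


open Matrix

section Helpers
variable {n : ℕ} {H1 H2 : Mat n} {f1 f2 : ℝ → ℝ} {U : ℝ → ℝ → Mat n}

lemma mexp_deriv {n : ℕ} (A : Mat n) {φ : ℝ → ℂ} {φ' : ℂ} {s : ℝ}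
    (hφ : HasDerivAt φ φ' s) :
    HasDerivAt (fun t => mexp (φ t • A)) (φ' • (A * mexp (φ s • A))) s := by
  have h := (hasDerivAt_exp_smul_const' (𝕂 := ℂ) A (φ s)).scomp s hφ
  simpa [mexp, Function.comp_def] using h

lemma mexp_comm {n : ℕ} (A : Mat n) (c : ℂ) : A * mexp (c • A) = mexp (c • A) * A :=
  ((Commute.refl A).smul_right c).exp_right |>.eq

lemma mexp_mul_mexp_neg {n : ℕ} (A : Mat n) (c : ℂ) :
    mexp (c • A) * mexp ((-c) • A) = 1 := by
  rw [mexp, mexp, ← Matrix.exp_add_of_commute]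
  · simp [NormedSpace.exp_zero]
  · exact ((Commute.refl A).smul_right (-c)).smul_left c

lemma mexp_neg_mul_mexp {n : ℕ} (A : Mat n) (c : ℂ) :
    mexp ((-c) • A) * mexp (c • A) = 1 := by
  have := mexp_mul_mexp_neg A (-c); simpa using this

lemma mexp_continuous {n : ℕ} (A : Mat n) {φ : ℝ → ℂ} (hφ : Continuous φ) :
    Continuous (fun t => mexp (φ t • A)) := by
  letI : NormedAlgebra ℚ (Mat n) := NormedAlgebra.restrictScalars ℚ ℂ (Mat n)
  exact NormedSpace.exp_continuous.comp (hφ.smul continuous_const)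

lemma star_deriv {n : ℕ} {f : ℝ → Mat n} {f' : Mat n} {s : ℝ} (h : HasDerivAt f f' s) :
    HasDerivAt (fun t => (f t)ᴴ) f'ᴴ s := by
  simpa [Matrix.star_eq_conjTranspose] using h.star

lemma phi_deriv {f : ℝ → ℝ} (hf : ContDiff ℝ 1 f) (c : ℂ) (s : ℝ) :
    HasDerivAt (fun t : ℝ => c * ((t * f t : ℝ) : ℂ))
      (c * ((f s + s * deriv f s : ℝ) : ℂ)) s := by
  have h1 : HasDerivAt (fun t : ℝ => t * f t) (f s + s * deriv f s) s := by
    have := (hasDerivAt_id s).mul ((hf.differentiable one_ne_zero s).hasDerivAt)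
    exact this.congr_deriv (by simp)
  exact (h1.ofReal_comp).const_mul c

lemma Ham_herm {n : ℕ} {H1 H2 : Mat n} (h1 : H1.IsHermitian) (h2 : H2.IsHermitian)
    (f1 f2 : ℝ → ℝ) (t : ℝ) : (Ham H1 H2 f1 f2 t)ᴴ = Ham H1 H2 f1 f2 t := by
  simp [Ham, Matrix.conjTranspose_add, Matrix.conjTranspose_smul, h1.eq, h2.eq,
    Complex.star_def, Complex.conj_ofReal]

lemma const_of_deriv_zero {n : ℕ} {f : ℝ → Mat n}
    (h : ∀ x, HasDerivAt f 0 x) (a b : ℝ) : f a = f b := by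
  have hd : Differentiable ℝ f := fun x => (h x).differentiableAt
  exact is_const_of_deriv_eq_zero hd (fun x => (h x).deriv) a b

lemma starW_deriv (hH1 : H1.IsHermitian) (hH2 : H2.IsHermitian)
    (hU : IsEvolution H1 H2 f1 f2 U) (t : ℝ) :
    HasDerivAt (fun τ => (U τ 0)ᴴ)
      (Complex.I • ((U t 0)ᴴ * Ham H1 H2 f1 f2 t)) t := by
  have h := star_deriv (hU.2 0 t)
  have : ((-Complex.I) • (Ham H1 H2 f1 f2 t * U t 0))ᴴ
      = Complex.I • ((U t 0)ᴴ * Ham H1 H2 f1 f2 t) := by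
    rw [Matrix.conjTranspose_smul, Matrix.conjTranspose_mul, Ham_herm hH1 hH2]
    simp [Complex.star_def]
  rwa [this] at h

lemma starW_mul_U (hH1 : H1.IsHermitian) (hH2 : H2.IsHermitian)
    (hU : IsEvolution H1 H2 f1 f2 U) (t s : ℝ) :
    (U t 0)ᴴ * U t s = (U s 0)ᴴ := by
  have key : ∀ τ : ℝ, HasDerivAt (fun τ => (U τ 0)ᴴ * U τ s) 0 τ := by
    intro τ
    have h := (starW_deriv hH1 hH2 hU τ).mul (hU.2 s τ)
    have e : Complex.I • ((U τ 0)ᴴ * Ham H1 H2 f1 f2 τ) * U τ s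
        + (U τ 0)ᴴ * ((-Complex.I) • (Ham H1 H2 f1 f2 τ * U τ s)) = 0 := by
      simp only [Matrix.smul_mul, Matrix.mul_smul, mul_assoc]
      module
    rwa [e] at h
  have := const_of_deriv_zero key t s
  simpa [hU.1 s] using this

lemma W_unitary (hH1 : H1.IsHermitian) (hH2 : H2.IsHermitian)
    (hU : IsEvolution H1 H2 f1 f2 U) (t : ℝ) :
    U t 0 * (U t 0)ᴴ = 1 := by
  have h := starW_mul_U hH1 hH2 hU t 0
  rw [hU.1 0, Matrix.conjTranspose_one] at h
  exact mul_eq_one_comm.mp h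

lemma U_repr (hH1 : H1.IsHermitian) (hH2 : H2.IsHermitian)
    (hU : IsEvolution H1 H2 f1 f2 U) (t s : ℝ) :
    U t s = U t 0 * (U s 0)ᴴ := by
  have h := starW_mul_U hH1 hH2 hU t s
  calc U t s = (U t 0 * (U t 0)ᴴ) * U t s := by rw [W_unitary hH1 hH2 hU]; simp
  _ = U t 0 * ((U t 0)ᴴ * U t s) := by rw [mul_assoc]
  _ = U t 0 * (U s 0)ᴴ := by rw [h]

lemma Es1_closed (hf2 : ContDiff ℝ 1 f2) (s : ℝ) :
    Es1 H1 H2 f1 f2 s =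
      (Complex.I * ((f1 s : ℝ) : ℂ)) •
        (mexp ((Complex.I * ((s * f2 s : ℝ) : ℂ)) • H2) * H1 *
           mexp ((-Complex.I * ((s * f2 s : ℝ) : ℂ)) • H2) - H1)
      - (Complex.I * ((s * deriv f1 s : ℝ) : ℂ)) • H1
      - (Complex.I * ((s * deriv f2 s : ℝ) : ℂ)) • H2 := by
  set C : ℝ → Mat n := fun r =>
    mexp ((Complex.I * ((r * f2 r : ℝ) : ℂ)) • H2) * matComm H1 H2 *
      mexp ((-Complex.I * ((r * f2 r : ℝ) : ℂ)) • H2) with hC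
  set D : ℝ → Mat n := fun r =>
    mexp ((Complex.I * ((r * f2 r : ℝ) : ℂ)) • H2) * H1 *
      mexp ((-Complex.I * ((r * f2 r : ℝ) : ℂ)) • H2) with hD
  have hφc : Continuous (fun r : ℝ => ((r * f2 r : ℝ) : ℂ)) :=
    Complex.continuous_ofReal.comp (continuous_id.mul hf2.continuous)
  have hCc : Continuous C := by
    exact ((mexp_continuous H2 (continuous_const.mul hφc)).mul continuous_const).mul
      (mexp_continuous H2 (continuous_const.mul hφc))
  have hf2' : Continuous (deriv f2) := hf2.continuous_deriv le_rfl
  have hqc : Continuous (fun r : ℝ => ((f2 r + r * deriv f2 r : ℝ) : ℂ)) :=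
    Complex.continuous_ofReal.comp (hf2.continuous.add (continuous_id.mul hf2'))
  -- derivative of D
  have hq : ∀ r : ℝ, HasDerivAt D
      ((-Complex.I * ((f2 r + r * deriv f2 r : ℝ) : ℂ)) • C r) r := by
    intro r
    have hp := mexp_deriv H2 (phi_deriv hf2 Complex.I r)
    have hm := mexp_deriv H2 (phi_deriv hf2 (-Complex.I) r)
    have h := (hp.mul_const H1).mul hm
    rw [hD]
    refine HasDerivAt.congr_deriv h ?_
    symm
    set q : ℂ := ((f2 r + r * deriv f2 r : ℝ) : ℂ)
    set Ep := mexp ((Complex.I * ((r * f2 r : ℝ) : ℂ)) • H2)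
    set Em := mexp ((-Complex.I * ((r * f2 r : ℝ) : ℂ)) • H2)
    have c1 : H2 * Ep = Ep * H2 := mexp_comm H2 _
    have c2 : H2 * Em = Em * H2 := mexp_comm H2 _
    calc (-Complex.I * q) • C r
        = (-Complex.I * q) • (Ep * (H1 * H2) * Em) -
          (-Complex.I * q) • (Ep * (H2 * H1) * Em) := by
          rw [hC]; simp only [matComm, Matrix.mul_sub, Matrix.sub_mul, smul_sub, mul_assoc]
          rfl
      _ = (Complex.I * q) • (H2 * Ep) * H1 * Em + Ep * H1 * (-Complex.I * q) • (H2 * Em) := by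
          rw [c1]
          simp only [Matrix.smul_mul, Matrix.mul_smul, mul_assoc]
          module
  -- FTC for D
  have hint : ∀ u : ℝ, IntervalIntegrable
      (fun r => (-Complex.I * ((f2 r + r * deriv f2 r : ℝ) : ℂ)) • C r) volume 0 u :=
    fun u => (((continuous_const.mul hqc).smul hCc)).intervalIntegrable 0 u
  have hD0 : D 0 = H1 := by
    simp [hD, mexp, NormedSpace.exp_zero]
  have hftc : (∫ r in (0:ℝ)..s,
      (-Complex.I * ((f2 r + r * deriv f2 r : ℝ) : ℂ)) • C r) = D s - H1 := by
    rw [intervalIntegral.integral_eq_sub_of_hasDerivAt (fun t _ => hq t) (hint s), hD0]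
  have hA : Continuous (fun r : ℝ => ((f2 r : ℝ) : ℂ) • C r) :=
    (Complex.continuous_ofReal.comp hf2.continuous).smul hCc
  have hB : Continuous (fun r : ℝ => ((r * deriv f2 r : ℝ) : ℂ) • C r) :=
    (Complex.continuous_ofReal.comp (continuous_id.mul hf2')).smul hCc
  have hsum : (∫ r in (0:ℝ)..s, ((f2 r : ℝ) : ℂ) • C r)
      + (∫ r in (0:ℝ)..s, ((r * deriv f2 r : ℝ) : ℂ) • C r)
      = Complex.I • (D s - H1) := by
    rw [← intervalIntegral.integral_add (hA.intervalIntegrable 0 s) (hB.intervalIntegrable 0 s),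
      ← hftc, ← intervalIntegral.integral_smul]
    refine intervalIntegral.integral_congr fun r _ => ?_
    rw [smul_smul, ← add_smul]
    congr 1
    rw [show ∀ z : ℂ, Complex.I * (-Complex.I * z) = z from fun z => by
      rw [← mul_assoc, mul_neg, Complex.I_mul_I, neg_neg, one_mul]]
    push_cast
    ring
  have e1 : (∫ r in (0:ℝ)..s, ((f1 s * f2 r : ℝ) : ℂ) • C r)
      = (f1 s : ℂ) • ∫ r in (0:ℝ)..s, ((f2 r : ℝ) : ℂ) • C r := by
    rw [← intervalIntegral.integral_smul]
    refine intervalIntegral.integral_congr fun r _ => ?_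
    rw [smul_smul]; congr 1; push_cast; ring
  have e2 : (∫ r in (0:ℝ)..s, ((r * f1 s * deriv f2 r : ℝ) : ℂ) • C r)
      = (f1 s : ℂ) • ∫ r in (0:ℝ)..s, ((r * deriv f2 r : ℝ) : ℂ) • C r := by
    rw [← intervalIntegral.integral_smul]
    refine intervalIntegral.integral_congr fun r _ => ?_
    rw [smul_smul]; congr 1; push_cast; ring
  rw [Es1]
  change (∫ r in (0:ℝ)..s, ((f1 s * f2 r : ℝ) : ℂ) • C r)
      - (Complex.I * ((s * deriv f1 s : ℝ) : ℂ)) • H1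
      - (Complex.I * ((s * deriv f2 s : ℝ) : ℂ)) • H2
      + (∫ r in (0:ℝ)..s, ((r * f1 s * deriv f2 r : ℝ) : ℂ) • C r)
      = (Complex.I * ((f1 s : ℝ) : ℂ)) • (D s - H1)
      - (Complex.I * ((s * deriv f1 s : ℝ) : ℂ)) • H1
      - (Complex.I * ((s * deriv f2 s : ℝ) : ℂ)) • H2
  rw [e1, e2,
    show ∀ (a b c d : Mat n), a - b - c + d = (a + d) - b - c from fun a b c d => by abel,
    ← smul_add, hsum, smul_smul, mul_comm ((f1 s : ℝ) : ℂ) Complex.I]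

lemma key_alg {n : ℕ} (K H1 H2 E1 E2 Ep : Mat n) (c1 c2 d1 d2 : ℂ)
    (hinv : E2 * Ep = 1) (hcomm : H2 * E2 = E2 * H2) :
    Complex.I • (K * (c1 • H1 + c2 • H2)) * (E2 * E1)
      + K * ((-Complex.I * (c2 + d2)) • (H2 * E2) * E1
        + E2 * ((-Complex.I * (c1 + d1)) • (H1 * E1)))
    = K * (E2 * ((Complex.I * c1) • (Ep * H1 * E2 - H1)
        - (Complex.I * d1) • H1 - (Complex.I * d2) • H2) * E1) := by
  have h2 : ∀ X : Mat n, E2 * (Ep * X) = X := fun X => by rw [← mul_assoc, hinv, one_mul]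
  have h3 : ∀ Y : Mat n, H2 * (E2 * Y) = E2 * (H2 * Y) := fun Y => by
    rw [← mul_assoc, hcomm, mul_assoc]
  simp only [mul_sub, sub_mul, mul_add, add_mul, Matrix.mul_smul, Matrix.smul_mul,
    smul_sub, smul_add, mul_assoc, h2, h3, smul_smul]
  module

end Helpers

/-- **Error representation of the first-order standard Trotter formula.** -/
theorem error_representation_first_order_standard_Trotter
    {n : ℕ} (hn : 0 < n) (H1 H2 : Mat n)
    (hH1 : H1.IsHermitian) (hH2 : H2.IsHermitian)
    (f1 f2 : ℝ → ℝ) (hf1 : ContDiff ℝ 1 f1) (hf2 : ContDiff ℝ 1 f2)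
    (U : ℝ → ℝ → Mat n) (hU : IsEvolution H1 H2 f1 f2 U)
    (h : ℝ) (hh : 0 ≤ h) :
    Us1 H1 H2 f1 f2 h 0 - U h 0 =
      ∫ s in (0:ℝ)..h,
        U h s * mexp ((-Complex.I * ((s * f2 s : ℝ) : ℂ)) • H2) * Es1 H1 H2 f1 f2 s *
          mexp ((-Complex.I * ((s * f1 s : ℝ) : ℂ)) • H1) := by
  have hKd := starW_deriv hH1 hH2 hU
  -- derivative of G t = (U t 0)ᴴ * (E2 t * E1 t)
  have hGd : ∀ s : ℝ, HasDerivAt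
      (fun t => (U t 0)ᴴ * (mexp ((-Complex.I * ((t * f2 t : ℝ) : ℂ)) • H2) *
        mexp ((-Complex.I * ((t * f1 t : ℝ) : ℂ)) • H1)))
      ((U s 0)ᴴ * (mexp ((-Complex.I * ((s * f2 s : ℝ) : ℂ)) • H2) * Es1 H1 H2 f1 f2 s *
        mexp ((-Complex.I * ((s * f1 s : ℝ) : ℂ)) • H1))) s := by
    intro s
    have hE2d := mexp_deriv H2 (phi_deriv hf2 (-Complex.I) s)
    have hE1d := mexp_deriv H1 (phi_deriv hf1 (-Complex.I) s)
    have e2 : (-Complex.I * ((f2 s + s * deriv f2 s : ℝ) : ℂ))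
        = -Complex.I * (((f2 s : ℝ) : ℂ) + ((s * deriv f2 s : ℝ) : ℂ)) := by push_cast; ring
    have e1 : (-Complex.I * ((f1 s + s * deriv f1 s : ℝ) : ℂ))
        = -Complex.I * (((f1 s : ℝ) : ℂ) + ((s * deriv f1 s : ℝ) : ℂ)) := by push_cast; ring
    rw [e2] at hE2d
    rw [e1] at hE1d
    have hKd' := hKd s
    simp only [Ham] at hKd'
    have hd := hKd'.mul (hE2d.mul hE1d)
    have hinv : mexp ((-Complex.I * ((s * f2 s : ℝ) : ℂ)) • H2) *
        mexp ((Complex.I * ((s * f2 s : ℝ) : ℂ)) • H2) = 1 := by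
      simpa [neg_mul] using mexp_neg_mul_mexp H2 (Complex.I * ((s * f2 s : ℝ) : ℂ))
    have hcm : H2 * mexp ((-Complex.I * ((s * f2 s : ℝ) : ℂ)) • H2)
        = mexp ((-Complex.I * ((s * f2 s : ℝ) : ℂ)) • H2) * H2 := mexp_comm H2 _
    have halg := key_alg ((U s 0)ᴴ) H1 H2
      (mexp ((-Complex.I * ((s * f1 s : ℝ) : ℂ)) • H1))
      (mexp ((-Complex.I * ((s * f2 s : ℝ) : ℂ)) • H2))
      (mexp ((Complex.I * ((s * f2 s : ℝ) : ℂ)) • H2))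
      ((f1 s : ℝ) : ℂ) ((f2 s : ℝ) : ℂ) ((s * deriv f1 s : ℝ) : ℂ) ((s * deriv f2 s : ℝ) : ℂ)
      hinv hcm
    rw [Es1_closed hf2 s, ← halg]
    exact hd
  -- continuity of the integrand g
  have hf1' : Continuous (deriv f1) := hf1.continuous_deriv le_rfl
  have hf2' : Continuous (deriv f2) := hf2.continuous_deriv le_rfl
  have hc2 : Continuous (fun s : ℝ => mexp ((-Complex.I * ((s * f2 s : ℝ) : ℂ)) • H2)) :=
    mexp_continuous H2 (continuous_const.mul
      (Complex.continuous_ofReal.comp (continuous_id.mul hf2.continuous)))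
  have hc2' : Continuous (fun s : ℝ => mexp ((Complex.I * ((s * f2 s : ℝ) : ℂ)) • H2)) :=
    mexp_continuous H2 (continuous_const.mul
      (Complex.continuous_ofReal.comp (continuous_id.mul hf2.continuous)))
  have hc1 : Continuous (fun s : ℝ => mexp ((-Complex.I * ((s * f1 s : ℝ) : ℂ)) • H1)) :=
    mexp_continuous H1 (continuous_const.mul
      (Complex.continuous_ofReal.comp (continuous_id.mul hf1.continuous)))
  have hKc : Continuous (fun s : ℝ => (U s 0)ᴴ) :=
    continuous_iff_continuousAt.mpr fun s => (hKd s).differentiableAt.continuousAt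
  have hEs1c : Continuous (Es1 H1 H2 f1 f2) := by
    rw [funext (Es1_closed (f1 := f1) hf2)]
    refine Continuous.sub (Continuous.sub
      (Continuous.smul (f := fun x : ℝ => Complex.I * ((f1 x : ℝ) : ℂ))
        (g := fun x : ℝ => mexp ((Complex.I * ((x * f2 x : ℝ) : ℂ)) • H2) * H1 *
          mexp ((-Complex.I * ((x * f2 x : ℝ) : ℂ)) • H2) - H1) ?_ ?_)
      (Continuous.smul (f := fun x : ℝ => Complex.I * ((x * deriv f1 x : ℝ) : ℂ))
        (g := fun _ : ℝ => H1) ?_ ?_))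
      (Continuous.smul (f := fun x : ℝ => Complex.I * ((x * deriv f2 x : ℝ) : ℂ))
        (g := fun _ : ℝ => H2) ?_ ?_)
    · exact continuous_const.mul (Complex.continuous_ofReal.comp hf1.continuous)
    · exact ((hc2'.mul continuous_const).mul hc2).sub continuous_const
    · exact continuous_const.mul
        (Complex.continuous_ofReal.comp (continuous_id.mul hf1'))
    · exact continuous_const
    · exact continuous_const.mul
        (Complex.continuous_ofReal.comp (continuous_id.mul hf2'))
    · exact continuous_const
  have hgc : Continuous (fun s : ℝ =>
      (U s 0)ᴴ * (mexp ((-Complex.I * ((s * f2 s : ℝ) : ℂ)) • H2) * Es1 H1 H2 f1 f2 s *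
        mexp ((-Complex.I * ((s * f1 s : ℝ) : ℂ)) • H1))) :=
    hKc.mul ((hc2.mul hEs1c).mul hc1)
  have hInt : IntervalIntegrable (fun s : ℝ =>
      (U s 0)ᴴ * (mexp ((-Complex.I * ((s * f2 s : ℝ) : ℂ)) • H2) * Es1 H1 H2 f1 f2 s *
        mexp ((-Complex.I * ((s * f1 s : ℝ) : ℂ)) • H1))) volume 0 h :=
    hgc.intervalIntegrable 0 h
  have hFTC := intervalIntegral.integral_eq_sub_of_hasDerivAt (fun t _ => hGd t) hInt
  have hG0 : (U 0 0)ᴴ * (mexp ((-Complex.I * ((0 * f2 0 : ℝ) : ℂ)) • H2) *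
      mexp ((-Complex.I * ((0 * f1 0 : ℝ) : ℂ)) • H1)) = 1 := by
    simp [hU.1 0, mexp, NormedSpace.exp_zero]
  have hcomm := (ContinuousLinearMap.mul ℂ (Mat n) (U h 0)).intervalIntegral_comp_comm hInt
  simp only [ContinuousLinearMap.mul_apply'] at hcomm
  have step : Us1 H1 H2 f1 f2 h 0 - U h 0
      = U h 0 * ((U h 0)ᴴ * (mexp ((-Complex.I * ((h * f2 h : ℝ) : ℂ)) • H2) *
          mexp ((-Complex.I * ((h * f1 h : ℝ) : ℂ)) • H1))
        - (U 0 0)ᴴ * (mexp ((-Complex.I * ((0 * f2 0 : ℝ) : ℂ)) • H2) *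
          mexp ((-Complex.I * ((0 * f1 0 : ℝ) : ℂ)) • H1))) := by
    rw [hG0, mul_sub, mul_one, ← mul_assoc, W_unitary hH1 hH2 hU h, one_mul]
    simp [Us1, sub_zero]
  rw [step, ← hFTC, ← hcomm]
  refine intervalIntegral.integral_congr fun s _ => ?_
  rw [U_repr hH1 hH2 hU h s]
  simp only [mul_assoc]
end
end

section
/- Error representation of the first-order generalized Trotter formula: for every h ≥ 0 one has U_{g,1}(h,0) - U(h,0) = ∫₀^h U(h,s) · exp(-i (∫₀^s f2(s')ds') H2) · E_{g,1}(s) · exp(-i (∫₀^s f1(s')ds') H1) ds, where for r ≥ 0, E_{g,1}(r) = ∫₀^r f1(r) f2(s) · exp(i (∫₀^s f2(s')ds') H2) [H1,H2] exp(-i (∫₀^s f2(s')ds') H2) ds. -/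
open scoped Matrix.Norms.L2Operator
open MeasureTheory

noncomputable section

/-- The integrand appearing in the error representation of the first-order generalized Trotter
formula. -/
noncomputable def Eg1 {n : ℕ} (H1 H2 : Mat n) (f1 f2 : ℝ → ℝ) (r : ℝ) : Mat n :=
  ∫ s in (0:ℝ)..r, ((f1 r * f2 s : ℝ) : ℂ) •
    (mexp ((Complex.I * ((∫ s' in (0:ℝ)..s, f2 s' : ℝ) : ℂ)) • H2) * matComm H1 H2 *
      mexp ((-Complex.I * ((∫ s' in (0:ℝ)..s, f2 s' : ℝ) : ℂ)) • H2))

----------------------------------------------------------------------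
-- Auxiliary development
----------------------------------------------------------------------

namespace TrotterAux

open Set intervalIntegral

variable {n : ℕ}

lemma hasDerivAt_primitive {f : ℝ → ℝ} (hf : Continuous f) (t : ℝ) :
    HasDerivAt (fun s => ∫ r in (0:ℝ)..s, f r) (f t) t :=
  intervalIntegral.integral_hasDerivAt_right (hf.intervalIntegrable _ _)
    (hf.stronglyMeasurableAtFilter _ _) hf.continuousAt

lemma hasDerivAt_mexp_comp (M : Mat n) (c : ℂ) {φ : ℝ → ℝ} {φ' : ℝ} {t : ℝ}
    (hφ : HasDerivAt φ φ' t) :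
    HasDerivAt (fun s => mexp ((c * (φ s : ℂ)) • M))
      ((c * (φ' : ℂ)) • (M * mexp ((c * (φ t : ℂ)) • M))) t := by
  have h1 : HasDerivAt (fun z : ℂ => NormedSpace.exp (z • M))
      (M * NormedSpace.exp ((c * (φ t : ℂ)) • M)) (c * (φ t : ℂ)) :=
    hasDerivAt_exp_smul_const' M _
  have h2 : HasDerivAt (fun s : ℝ => c * (φ s : ℂ)) (c * (φ' : ℂ)) t :=
    (hφ.ofReal_comp).const_mul c
  exact h1.scomp t h2

lemma ode_zero_fwd {M : ℝ → Mat n} (hM : Continuous M) {D : ℝ → Mat n}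
    (hD : ∀ t, HasDerivAt D (M t * D t) t) {a b : ℝ} (ha : D a = 0) :
    ∀ t ∈ Icc a b, D t = 0 := by
  obtain ⟨C, hC⟩ := (isCompact_Icc (a := a) (b := b)).exists_bound_of_continuousOn
    hM.continuousOn
  intro t ht
  have key := norm_le_gronwallBound_of_norm_deriv_right_le (f := D)
    (f' := fun t => M t * D t) (δ := 0) (K := max C 0) (ε := 0) (a := a) (b := b)
    (fun τ _ => (hD τ).continuousAt.continuousWithinAt)
    (fun τ _ => (hD τ).hasDerivWithinAt)
    (by simp [ha])
    (fun τ hτ => by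
      calc ‖M τ * D τ‖ ≤ ‖M τ‖ * ‖D τ‖ := norm_mul_le _ _
        _ ≤ max C 0 * ‖D τ‖ + 0 := by
            rw [add_zero]
            exact mul_le_mul_of_nonneg_right ((hC τ (Ico_subset_Icc_self hτ)).trans
              (le_max_left _ _)) (norm_nonneg _))
  have := key t ht
  rw [gronwallBound_ε0_δ0] at this
  simpa using le_antisymm this (norm_nonneg _)

lemma ode_zero {M : ℝ → Mat n} (hM : Continuous M) {D : ℝ → Mat n}
    (hD : ∀ t, HasDerivAt D (M t * D t) t) {s : ℝ} (hs : D s = 0) (t : ℝ) :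
    D t = 0 := by
  rcases le_total s t with h | h
  · exact ode_zero_fwd hM hD hs t ⟨h, le_refl t⟩
  · have hE : ∀ τ, HasDerivAt (fun τ => D (2 * s - τ))
        ((- M (2 * s - τ)) * D (2 * s - τ)) τ := by
      intro τ
      have h1 : HasDerivAt (fun τ : ℝ => 2 * s - τ) (-1) τ :=
        (hasDerivAt_id τ).const_sub (2 * s) |>.congr_deriv (by ring)
      have := (hD (2 * s - τ)).scomp τ h1
      simp only [neg_smul, one_smul] at this
      rw [neg_mul]
      exact this
    have key := ode_zero_fwd (M := fun τ => - M (2 * s - τ))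
      ((hM.comp (by continuity)).neg) hE (a := s) (b := 2 * s - t)
      (by rw [show 2 * s - s = s by ring]; exact hs) (2 * s - t) ⟨by linarith, le_refl _⟩
    simpa using key

/-- `exp(-i (∫_0^s f) M)`. -/
noncomputable def eA (M : Mat n) (f : ℝ → ℝ) (s : ℝ) : Mat n :=
  mexp ((-Complex.I * ((∫ r in (0:ℝ)..s, f r : ℝ) : ℂ)) • M)

/-- `exp(i (∫_0^s f) M)`. -/
noncomputable def eP (M : Mat n) (f : ℝ → ℝ) (s : ℝ) : Mat n :=
  mexp ((Complex.I * ((∫ r in (0:ℝ)..s, f r : ℝ) : ℂ)) • M)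

lemma eA_deriv (M : Mat n) {f : ℝ → ℝ} (hf : Continuous f) (t : ℝ) :
    HasDerivAt (eA M f) ((-Complex.I * (f t : ℂ)) • (M * eA M f t)) t :=
  hasDerivAt_mexp_comp M (-Complex.I) (hasDerivAt_primitive hf t)

lemma eP_deriv (M : Mat n) {f : ℝ → ℝ} (hf : Continuous f) (t : ℝ) :
    HasDerivAt (eP M f) ((Complex.I * (f t : ℂ)) • (M * eP M f t)) t :=
  hasDerivAt_mexp_comp M Complex.I (hasDerivAt_primitive hf t)

lemma eA_cont (M : Mat n) {f : ℝ → ℝ} (hf : Continuous f) : Continuous (eA M f) :=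
  continuous_iff_continuousAt.mpr fun t => (eA_deriv M hf t).continuousAt

lemma eP_cont (M : Mat n) {f : ℝ → ℝ} (hf : Continuous f) : Continuous (eP M f) :=
  continuous_iff_continuousAt.mpr fun t => (eP_deriv M hf t).continuousAt

lemma mexp_smul_mul (M : Mat n) (z w : ℂ) :
    mexp (z • M) * mexp (w • M) = mexp ((z + w) • M) := by
  rw [mexp, mexp, mexp, ← Matrix.exp_add_of_commute _ _
    (((Commute.refl M).smul_left z).smul_right w), add_smul]

lemma eP_mul_eA (M : Mat n) (f : ℝ → ℝ) (s : ℝ) : eP M f s * eA M f s = 1 := by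
  rw [eP, eA, mexp_smul_mul]
  have : (Complex.I * ((∫ r in (0:ℝ)..s, f r : ℝ) : ℂ)) +
      (-Complex.I * ((∫ r in (0:ℝ)..s, f r : ℝ) : ℂ)) = 0 := by ring
  rw [this, zero_smul, mexp, NormedSpace.exp_zero]

lemma eA_mul_eP (M : Mat n) (f : ℝ → ℝ) (s : ℝ) : eA M f s * eP M f s = 1 := by
  rw [eA, eP, mexp_smul_mul]
  have : (-Complex.I * ((∫ r in (0:ℝ)..s, f r : ℝ) : ℂ)) +
      (Complex.I * ((∫ r in (0:ℝ)..s, f r : ℝ) : ℂ)) = 0 := by ring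
  rw [this, zero_smul, mexp, NormedSpace.exp_zero]

lemma mexp_comm (M : Mat n) (z : ℂ) : M * mexp (z • M) = mexp (z • M) * M :=
  (((Commute.refl M).smul_right z).exp_right).symm ▸ rfl

lemma eP_comm (M : Mat n) (f : ℝ → ℝ) (s : ℝ) : M * eP M f s = eP M f s * M :=
  ((Commute.refl M).smul_right _).exp_right

lemma eA_comm (M : Mat n) (f : ℝ → ℝ) (s : ℝ) : M * eA M f s = eA M f s * M :=
  ((Commute.refl M).smul_right _).exp_right

lemma eA_zero (M : Mat n) (f : ℝ → ℝ) : eA M f 0 = 1 := by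
  simp [eA, mexp, NormedSpace.exp_zero]

lemma eP_zero (M : Mat n) (f : ℝ → ℝ) : eP M f 0 = 1 := by
  simp [eP, mexp, NormedSpace.exp_zero]

/-- The key rewriting of `Eg1` via the fundamental theorem of calculus. -/
lemma Eg1_eq (H1 H2 : Mat n) (f1 f2 : ℝ → ℝ) (hf2 : Continuous f2) (s : ℝ) :
    Eg1 H1 H2 f1 f2 s =
      (-Complex.I * (f1 s : ℂ)) • (H1 - eP H2 f2 s * H1 * eA H2 f2 s) := by
  have hg : ∀ r, HasDerivAt (fun r => eP H2 f2 r * H1 * eA H2 f2 r)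
      ((-Complex.I * (f2 r : ℂ)) • (eP H2 f2 r * matComm H1 H2 * eA H2 f2 r)) r := by
    intro r
    have := ((eP_deriv H2 hf2 r).mul_const H1).mul (eA_deriv H2 hf2 r)
    convert this using 1 <;> try rfl
    simp only [matComm, smul_mul_assoc, mul_smul_comm, mul_sub, sub_mul, smul_sub,
      mul_assoc]
    rw [show H2 * (eP H2 f2 r * (H1 * eA H2 f2 r)) =
      eP H2 f2 r * (H2 * (H1 * eA H2 f2 r)) from by rw [← mul_assoc, eP_comm, mul_assoc]]
    module
  have hcont : Continuous (fun r =>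
      (-Complex.I * (f2 r : ℂ)) • (eP H2 f2 r * matComm H1 H2 * eA H2 f2 r)) := by
    apply Continuous.fun_smul
    · exact continuous_const.mul (Complex.continuous_ofReal.comp hf2)
    · exact ((eP_cont H2 hf2).mul continuous_const).mul (eA_cont H2 hf2)
  have hFTC : (∫ r in (0:ℝ)..s,
        (-Complex.I * (f2 r : ℂ)) • (eP H2 f2 r * matComm H1 H2 * eA H2 f2 r)) =
      eP H2 f2 s * H1 * eA H2 f2 s - eP H2 f2 0 * H1 * eA H2 f2 0 :=
    intervalIntegral.integral_eq_sub_of_hasDerivAt (fun r _ => hg r)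
      (hcont.intervalIntegrable _ _)
  have heq : ∀ r : ℝ, ((f1 s * f2 r : ℝ) : ℂ) •
        (eP H2 f2 r * matComm H1 H2 * eA H2 f2 r) =
      ((f1 s : ℂ) * Complex.I) •
        ((-Complex.I * (f2 r : ℂ)) • (eP H2 f2 r * matComm H1 H2 * eA H2 f2 r)) := by
    intro r
    rw [smul_smul]
    congr 1
    push_cast
    ring_nf
    rw [Complex.I_sq]
    ring
  rw [Eg1]
  show (∫ r in (0:ℝ)..s, ((f1 s * f2 r : ℝ) : ℂ) •
      (eP H2 f2 r * matComm H1 H2 * eA H2 f2 r)) = _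
  simp only [heq]
  rw [intervalIntegral.integral_smul, hFTC, eA_zero, eP_zero, one_mul, mul_one]
  module

end TrotterAux

open TrotterAux in
/-- **Error representation of the first-order generalized Trotter formula.** -/
theorem error_representation_first_order_generalized_Trotter
    {n : ℕ} (hn : 0 < n) (H1 H2 : Mat n)
    (hH1 : H1.IsHermitian) (hH2 : H2.IsHermitian)
    (f1 f2 : ℝ → ℝ) (hf1 : ContDiff ℝ 1 f1) (hf2 : ContDiff ℝ 1 f2)
    (U : ℝ → ℝ → Mat n) (hU : IsEvolution H1 H2 f1 f2 U)
    (h : ℝ) (hh : 0 ≤ h) :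
    Ug1 H1 H2 f1 f2 h 0 - U h 0 =
      ∫ s in (0:ℝ)..h,
        U h s * mexp ((-Complex.I * ((∫ s' in (0:ℝ)..s, f2 s' : ℝ) : ℂ)) • H2) *
          Eg1 H1 H2 f1 f2 s *
          mexp ((-Complex.I * ((∫ s' in (0:ℝ)..s, f1 s' : ℝ) : ℂ)) • H1) := by
  classical
  obtain ⟨hUid, hUderiv⟩ := hU
  have hc1 : Continuous f1 := hf1.continuous
  have hc2 : Continuous f2 := hf2.continuous
  have hHam : Continuous (Ham H1 H2 f1 f2) := by
    unfold Ham
    exact ((Complex.continuous_ofReal.comp hc1).smul continuous_const).add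
      ((Complex.continuous_ofReal.comp hc2).smul continuous_const)
  -- group property
  have key1 : ∀ s t : ℝ, U t s * U s 0 = U t 0 := by
    intro s t
    have hD : ∀ τ : ℝ, HasDerivAt (fun τ => U τ s * U s 0 - U τ 0)
        (((-Complex.I) • Ham H1 H2 f1 f2 τ) * (U τ s * U s 0 - U τ 0)) τ := by
      intro τ
      have h3 := ((hUderiv s τ).mul_const (U s 0)).sub (hUderiv 0 τ)
      convert h3 using 1 <;> try rfl
      simp only [smul_mul_assoc, mul_sub, smul_sub, mul_assoc]
    have hM : Continuous (fun τ => (-Complex.I) • Ham H1 H2 f1 f2 τ) :=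
      hHam.const_smul (-Complex.I)
    have h0 : (fun τ => U τ s * U s 0 - U τ 0) s = 0 := by
      simp [hUid s]
    exact sub_eq_zero.mp (ode_zero hM hD h0 t)
  have key2 : ∀ s : ℝ, U 0 s * U s 0 = 1 := fun s => by rw [key1 s 0, hUid 0]
  have key3 : ∀ s : ℝ, U s 0 * U 0 s = 1 := fun s => mul_eq_one_comm.mp (key2 s)
  have key4 : ∀ s : ℝ, U h s = U h 0 * U 0 s := by
    intro s
    calc U h s = U h s * (U s 0 * U 0 s) := by rw [key3 s, mul_one]
    _ = (U h s * U s 0) * U 0 s := by rw [mul_assoc]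
    _ = U h 0 * U 0 s := by rw [key1 s h]
  -- derivative of s ↦ U 0 s
  have hW : ∀ s : ℝ, HasDerivAt (fun s => U 0 s)
      (Complex.I • (U 0 s * Ham H1 H2 f1 f2 s)) s := by
    intro s
    have heq : (fun s : ℝ => U 0 s) = fun s => Ring.inverse (U s 0) := by
      funext τ
      exact (Ring.inverse_unit ⟨U τ 0, U 0 τ, key3 τ, key2 τ⟩).symm
    rw [heq]
    have hf := hasFDerivAt_ringInverse (𝕜 := ℂ)
      (⟨U s 0, U 0 s, key3 s, key2 s⟩ : (Mat n)ˣ)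
    have hcomp := (hf.restrictScalars ℝ).comp_hasDerivAt s (hUderiv 0 s)
    convert hcomp using 1 <;> try rfl
    have hui : ((⟨U s 0, U 0 s, key3 s, key2 s⟩ : (Mat n)ˣ)⁻¹ : (Mat n)ˣ) = (⟨U 0 s, U s 0, key2 s, key3 s⟩ : (Mat n)ˣ) := rfl
    simp only [ContinuousLinearMap.coe_restrictScalars', ContinuousLinearMap.neg_apply,
      ContinuousLinearMap.mulLeftRight_apply, hui]
    show Complex.I • (U 0 s * Ham H1 H2 f1 f2 s) =
      -(U 0 s * ((-Complex.I) • (Ham H1 H2 f1 f2 s * U s 0)) * U 0 s)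
    rw [mul_smul_comm, smul_mul_assoc, mul_assoc, mul_assoc, key3 s, mul_one,
      ← neg_smul, neg_neg]
  -- the derivative of the interpolating path
  have hΦ : ∀ s : ℝ, HasDerivAt
      (fun s => U h 0 * U 0 s * (eA H2 f2 s * eA H1 f1 s))
      (U h 0 * U 0 s * eA H2 f2 s *
        ((-Complex.I * (f1 s : ℂ)) • (H1 - eP H2 f2 s * H1 * eA H2 f2 s)) *
        eA H1 f1 s) s := by
    intro s
    have d1 : HasDerivAt (fun s => U h 0 * U 0 s)
        (U h 0 * (Complex.I • (U 0 s * Ham H1 H2 f1 f2 s))) s := (hW s).const_mul (U h 0)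
    have d2 := (eA_deriv H2 hc2 s).mul (eA_deriv H1 hc1 s)
    have d3 := d1.mul d2
    convert d3 using 1 <;> try rfl
    have hAP : ∀ Z : Mat n, eA H2 f2 s * (eP H2 f2 s * Z) = Z := by
      intro Z; rw [← mul_assoc, eA_mul_eP, one_mul]
    simp only [Ham, smul_mul_assoc, mul_smul_comm, mul_add, add_mul, smul_add,
      mul_sub, sub_mul, smul_sub, mul_assoc, smul_smul]
    rw [hAP]
    module
  -- continuity of the derivative
  have hXc : Continuous (fun s => U 0 s) :=
    continuous_iff_continuousAt.mpr fun s => (hW s).continuousAt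
  have hsm : Continuous (fun s =>
      ((-Complex.I * (f1 s : ℂ)) • (H1 - eP H2 f2 s * H1 * eA H2 f2 s))) :=
    ((continuous_const.mul (Complex.continuous_ofReal.comp hc1)).smul
      (continuous_const.sub (((eP_cont H2 hc2).mul continuous_const).mul
        (eA_cont H2 hc2))))
  have hDc : Continuous (fun s => U h 0 * U 0 s * eA H2 f2 s *
      ((-Complex.I * (f1 s : ℂ)) • (H1 - eP H2 f2 s * H1 * eA H2 f2 s)) *
      eA H1 f1 s) :=
    (((continuous_const.mul hXc).mul (eA_cont H2 hc2)).mul hsm).mul (eA_cont H1 hc1)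
  have hFTC := intervalIntegral.integral_eq_sub_of_hasDerivAt
    (f := fun s => U h 0 * U 0 s * (eA H2 f2 s * eA H1 f1 s))
    (fun s _ => hΦ s) (hDc.intervalIntegrable 0 h)
  -- assembly
  show Ug1 H1 H2 f1 f2 h 0 - U h 0 =
    ∫ s in (0:ℝ)..h, U h s * eA H2 f2 s * Eg1 H1 H2 f1 f2 s * eA H1 f1 s
  have hfun : (fun s => U h s * eA H2 f2 s * Eg1 H1 H2 f1 f2 s * eA H1 f1 s)
      = fun s => U h 0 * U 0 s * eA H2 f2 s *
        ((-Complex.I * (f1 s : ℂ)) • (H1 - eP H2 f2 s * H1 * eA H2 f2 s)) *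
        eA H1 f1 s := by
    funext s
    rw [key4 s, Eg1_eq H1 H2 f1 f2 hc2 s]
  rw [hfun, hFTC]
  simp only [hUid 0, eA_zero, key3 h, one_mul, mul_one]
  rfl
end
end

section
/- Error representation of the second-order generalized Trotter formula: for every h ≥ 0 one has U_{g,2}(h,0) - U(h,0) = ∫₀^h U(h,s) · exp(-i (∫_{s/2}^{s} f1(s')ds') H1) · E_{g,2}(s) · exp(-i (∫₀^{s} f2(s')ds') H2) · exp(-i (∫₀^{s/2} f1(s')ds') H1) ds, where, writing Conj1(s)(B) = exp(i (∫_{s/2}^{s} f1(s')ds') H1) B exp(-i (∫_{s/2}^{s} f1(s')ds') H1) and Conj2(s)(B) = exp(-i (∫₀^{s} f2(s')ds') H2) B exp(i (∫₀^{s} f2(s')ds') H2), one has for r ≥ 0: E_{g,2}(r) = -(r/2) f1(0) (∫₀^r f2'(s)ds) [H1,H2] + (r/4) f2(0) (∫₀^r f1'(s/2)ds) [H1,H2] - f2(r) ∫₀^r (f1'(s) - (1/4) f1'(s/2)) · Conj1(s)([H1,H2]) · (r-s) ds + (1/2) f1(r/2) ∫₀^r f2'(s) · Conj2(s)([H1,H2])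 · (r-s) ds - i f2(r) ∫₀^r (f1(s) - (1/2) f1(s/2))² · Conj1(s)([H1,[H1,H2]]) · (r-s) ds + (i/2) f1(r/2) ∫₀^r f2(s)² · Conj2(s)([H2,[H2,H1]]) · (r-s) ds. -/
open scoped Matrix.Norms.L2Operator
open MeasureTheory

noncomputable section

/-- `Conj1 H1 f1 s B = exp(i (∫_{s/2}^{s} f1) H1) B exp(-i (∫_{s/2}^{s} f1) H1)`. -/
noncomputable def Conj1 {n : ℕ} (H1 : Mat n) (f1 : ℝ → ℝ) (s : ℝ) (B : Mat n) : Mat n :=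
  mexp ((Complex.I * ((∫ s' in (s/2)..s, f1 s' : ℝ) : ℂ)) • H1) * B *
    mexp ((-Complex.I * ((∫ s' in (s/2)..s, f1 s' : ℝ) : ℂ)) • H1)

/-- `Conj2 H2 f2 s B = exp(-i (∫_0^s f2) H2) B exp(i (∫_0^s f2) H2)`. -/
noncomputable def Conj2 {n : ℕ} (H2 : Mat n) (f2 : ℝ → ℝ) (s : ℝ) (B : Mat n) : Mat n :=
  mexp ((-Complex.I * ((∫ s' in (0:ℝ)..s, f2 s' : ℝ) : ℂ)) • H2) * B *
    mexp ((Complex.I * ((∫ s' in (0:ℝ)..s, f2 s' : ℝ) : ℂ)) • H2)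

/-- The integrand appearing in the error representation of the second-order generalized
Trotter formula. -/
noncomputable def Eg2 {n : ℕ} (H1 H2 : Mat n) (f1 f2 : ℝ → ℝ) (r : ℝ) : Mat n :=
  ((-(r / 2) * f1 0 * ∫ s in (0:ℝ)..r, deriv f2 s : ℝ) : ℂ) • matComm H1 H2
  + (((r / 4) * f2 0 * ∫ s in (0:ℝ)..r, deriv f1 (s / 2) : ℝ) : ℂ) • matComm H1 H2
  - (∫ s in (0:ℝ)..r, ((f2 r * (deriv f1 s - (1/4) * deriv f1 (s/2)) * (r - s) : ℝ) : ℂ) •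
      Conj1 H1 f1 s (matComm H1 H2))
  + (∫ s in (0:ℝ)..r, (((1/2) * f1 (r/2) * deriv f2 s * (r - s) : ℝ) : ℂ) •
      Conj2 H2 f2 s (matComm H1 H2))
  - Complex.I • (∫ s in (0:ℝ)..r, ((f2 r * (f1 s - (1/2) * f1 (s/2))^2 * (r - s) : ℝ) : ℂ) •
      Conj1 H1 f1 s (matComm H1 (matComm H1 H2)))
  + (Complex.I / 2) • (∫ s in (0:ℝ)..r, ((f1 (r/2) * (f2 s)^2 * (r - s) : ℝ) : ℂ) •
      Conj2 H2 f2 s (matComm H2 (matComm H2 H1)))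

namespace TAux
variable {n : ℕ}

noncomputable def eA (M : Mat n) (z : ℂ) : Mat n := mexp (z • M)

lemma eA_add (M : Mat n) (z w : ℂ) : eA M (z + w) = eA M z * eA M w := by
  simp only [eA, mexp, add_smul]
  exact Matrix.exp_add_of_commute _ _ (((Commute.refl M).smul_left z).smul_right w)

lemma eA_zero (M : Mat n) : eA M 0 = 1 := by
  simp [eA, mexp, NormedSpace.exp_zero]

lemma eA_mul_neg (M : Mat n) (z : ℂ) : eA M z * eA M (-z) = 1 := by
  rw [← eA_add, add_neg_cancel, eA_zero]

lemma eA_neg_mul (M : Mat n) (z : ℂ) : eA M (-z) * eA M z = 1 := by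
  rw [← eA_add, neg_add_cancel, eA_zero]

lemma eA_comm (M : Mat n) (z : ℂ) : M * eA M z = eA M z * M := by
  simp only [eA, mexp]
  exact (((Commute.refl M).smul_right z).exp_right).eq

lemma eA_cancel₁ (M : Mat n) (z : ℂ) (X : Mat n) : eA M z * (eA M (-z) * X) = X := by
  rw [← mul_assoc, eA_mul_neg, one_mul]

lemma eA_cancel₂ (M : Mat n) (z : ℂ) (X : Mat n) : eA M (-z) * (eA M z * X) = X := by
  rw [← mul_assoc, eA_neg_mul, one_mul]

lemma hasDerivAt_eA (M : Mat n) {g : ℝ → ℂ} {g' : ℂ} {t : ℝ}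
    (hg : HasDerivAt g g' t) :
    HasDerivAt (fun s => eA M (g s)) (g' • (eA M (g t) * M)) t := by
  have h1 : HasDerivAt (fun z : ℂ => eA M z) (eA M (g t) * M) (g t) :=
    hasDerivAt_exp_smul_const (𝕂 := ℂ) M (g t)
  exact (h1.scomp t hg :)

/-! ### scalar integral functions -/

noncomputable def bInt (f : ℝ → ℝ) (s : ℝ) : ℝ := ∫ s' in (0:ℝ)..s, f s'
noncomputable def cInt (f : ℝ → ℝ) (s : ℝ) : ℝ := bInt f (s/2)
noncomputable def aInt (f : ℝ → ℝ) (s : ℝ) : ℝ := ∫ s' in (s/2)..s, f s'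

lemma aInt_eq (f : ℝ → ℝ) (hf : Continuous f) (s : ℝ) :
    aInt f s = bInt f s - cInt f s := by
  simp only [aInt, bInt, cInt]
  rw [eq_sub_iff_add_eq, add_comm,
    intervalIntegral.integral_add_adjacent_intervals
      (hf.intervalIntegrable _ _) (hf.intervalIntegrable _ _)]

lemma hasDerivAt_bInt {f : ℝ → ℝ} (hf : Continuous f) (s : ℝ) :
    HasDerivAt (bInt f) (f s) s :=
  intervalIntegral.integral_hasDerivAt_right (hf.intervalIntegrable _ _)
    (hf.stronglyMeasurableAtFilter _ _) hf.continuousAt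

lemma hasDerivAt_cInt {f : ℝ → ℝ} (hf : Continuous f) (s : ℝ) :
    HasDerivAt (cInt f) (f (s/2) / 2) s := by
  have h := (hasDerivAt_bInt hf (s/2)).comp s ((hasDerivAt_id s).div_const 2)
  exact h.congr_deriv (by ring)

lemma hasDerivAt_aInt {f : ℝ → ℝ} (hf : Continuous f) (s : ℝ) :
    HasDerivAt (aInt f) (f s - f (s/2) / 2) s := by
  have h := (hasDerivAt_bInt hf s).sub (hasDerivAt_cInt hf s)
  exact h.congr_deriv rfl |>.congr_of_eventuallyEq
    (Filter.Eventually.of_forall fun x => (aInt_eq f hf x))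

lemma aInt_zero (f : ℝ → ℝ) : aInt f 0 = 0 := by
  simp [aInt]

lemma bInt_zero (f : ℝ → ℝ) : bInt f 0 = 0 := by
  simp [bInt]

/-! ### the matrix exponential factors -/

variable (H1 H2 : Mat n) (f1 f2 : ℝ → ℝ)

noncomputable def Af (s : ℝ) : Mat n := eA H1 (-(Complex.I * (aInt f1 s : ℝ)))
noncomputable def Aif (s : ℝ) : Mat n := eA H1 (Complex.I * (aInt f1 s : ℝ))
noncomputable def Bf (s : ℝ) : Mat n := eA H2 (-(Complex.I * (bInt f2 s : ℝ)))
noncomputable def Bif (s : ℝ) : Mat n := eA H2 (Complex.I * (bInt f2 s : ℝ))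
noncomputable def Cf (s : ℝ) : Mat n := eA H1 (-(Complex.I * (cInt f1 s : ℝ)))
noncomputable def Wf (s : ℝ) : Mat n := Af H1 f1 s * (Bf H2 f2 s * Cf H1 f1 s)

noncomputable def da (f : ℝ → ℝ) (s : ℝ) : ℝ := f s - f (s/2) / 2

variable {f1 f2}

lemma hasDerivAt_Af (hf1 : Continuous f1) (s : ℝ) :
    HasDerivAt (Af H1 f1) ((-(Complex.I * (da f1 s : ℝ))) • (Af H1 f1 s * H1)) s :=
  hasDerivAt_eA H1 (((hasDerivAt_aInt hf1 s).ofReal_comp.const_mul Complex.I).neg)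

lemma hasDerivAt_Aif (hf1 : Continuous f1) (s : ℝ) :
    HasDerivAt (Aif H1 f1) ((Complex.I * (da f1 s : ℝ)) • (Aif H1 f1 s * H1)) s :=
  hasDerivAt_eA H1 ((hasDerivAt_aInt hf1 s).ofReal_comp.const_mul Complex.I)

lemma hasDerivAt_Bf (hf2 : Continuous f2) (s : ℝ) :
    HasDerivAt (Bf H2 f2) ((-(Complex.I * (f2 s : ℝ))) • (Bf H2 f2 s * H2)) s :=
  hasDerivAt_eA H2 (((hasDerivAt_bInt hf2 s).ofReal_comp.const_mul Complex.I).neg)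

lemma hasDerivAt_Bif (hf2 : Continuous f2) (s : ℝ) :
    HasDerivAt (Bif H2 f2) ((Complex.I * (f2 s : ℝ)) • (Bif H2 f2 s * H2)) s :=
  hasDerivAt_eA H2 ((hasDerivAt_bInt hf2 s).ofReal_comp.const_mul Complex.I)

lemma hasDerivAt_Cf (hf1 : Continuous f1) (s : ℝ) :
    HasDerivAt (Cf H1 f1) ((-(Complex.I * (f1 (s/2) / 2 : ℝ))) • (Cf H1 f1 s * H1)) s :=
  hasDerivAt_eA H1 (((hasDerivAt_cInt hf1 s).ofReal_comp.const_mul Complex.I).neg)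

end TAux

namespace TAux
variable {n : ℕ} (H1 H2 : Mat n) (f1 f2 : ℝ → ℝ)

noncomputable def Wd (s : ℝ) : Mat n :=
  ((-(Complex.I * (da f1 s : ℝ))) • (Af H1 f1 s * H1)) * (Bf H2 f2 s * Cf H1 f1 s)
  + Af H1 f1 s * ((((-(Complex.I * (f2 s : ℝ))) • (Bf H2 f2 s * H2)) * Cf H1 f1 s)
      + Bf H2 f2 s * ((-(Complex.I * (f1 (s/2) / 2 : ℝ))) • (Cf H1 f1 s * H1)))

lemma hasDerivAt_Wf (hf1 : Continuous f1) (hf2 : Continuous f2) (s : ℝ) :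
    HasDerivAt (Wf H1 H2 f1 f2) (Wd H1 H2 f1 f2 s) s := by
  have h := (hasDerivAt_Af H1 hf1 s).mul
    (((hasDerivAt_Bf H2 hf2 s).mul (hasDerivAt_Cf H1 hf1 s)))
  rw [show Wf H1 H2 f1 f2 = Af H1 f1 * (Bf H2 f2 * Cf H1 f1) from rfl]
  simpa [Wf, Wd, mul_add, add_mul, mul_assoc] using h

noncomputable def Dd (s : ℝ) : Mat n :=
  (Complex.I * (f2 s : ℝ)) • ((H2 * Af H1 f1 s - Af H1 f1 s * H2) * (Bf H2 f2 s * Cf H1 f1 s))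
  + (Complex.I * (f1 (s/2) / 2 : ℝ)) •
      (H1 * Wf H1 H2 f1 f2 s - Af H1 f1 s * (Bf H2 f2 s * (H1 * Cf H1 f1 s)))

lemma defect (s : ℝ) :
    Complex.I • (Ham H1 H2 f1 f2 s * Wf H1 H2 f1 f2 s) + Wd H1 H2 f1 f2 s
      = Dd H1 H2 f1 f2 s := by
  have c1 : ∀ z, eA H1 z * H1 = H1 * eA H1 z := fun z => (eA_comm H1 z).symm
  have c2 : ∀ z, eA H2 z * H2 = H2 * eA H2 z := fun z => (eA_comm H2 z).symm
  simp only [Dd, Wd, Wf, Ham, da, Af, Bf, Cf, smul_mul_assoc, mul_smul_comm, add_mul, mul_add,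
    sub_mul, mul_sub, smul_sub, smul_add, add_smul, smul_smul, c1, c2, mul_assoc]
  match_scalars <;> push_cast <;> ring

end TAux
namespace TAux
variable {n : ℕ} {H1 H2 : Mat n} {f1 f2 : ℝ → ℝ} {U : ℝ → ℝ → Mat n}

lemma star_Ham (hH1 : H1.IsHermitian) (hH2 : H2.IsHermitian) (t : ℝ) :
    star (Ham H1 H2 f1 f2 t) = Ham H1 H2 f1 f2 t := by
  simp only [Ham, star_add, star_smul, Matrix.star_eq_conjTranspose, hH1.eq, hH2.eq,
    Complex.star_def, Complex.conj_ofReal]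

noncomputable def Vf (U : ℝ → ℝ → Mat n) (s : ℝ) : Mat n := star (U s 0)

lemma hasDerivAt_Vf (hH1 : H1.IsHermitian) (hH2 : H2.IsHermitian)
    (hU : IsEvolution H1 H2 f1 f2 U) (s : ℝ) :
    HasDerivAt (Vf U) (Complex.I • (Vf U s * Ham H1 H2 f1 f2 s)) s := by
  have h := (hU.2 0 s).star
  have : star ((-Complex.I) • (Ham H1 H2 f1 f2 s * U s 0))
      = Complex.I • (Vf U s * Ham H1 H2 f1 f2 s) := by
    simp [star_smul, star_mul, Vf, star_Ham hH1 hH2, Complex.star_def]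
  rwa [this] at h

lemma const_of_deriv_zero {f : ℝ → Mat n} (hf : ∀ t, HasDerivAt f 0 t) (x y : ℝ) :
    f x = f y :=
  is_const_of_deriv_eq_zero (𝕜 := ℝ) (fun t => (hf t).differentiableAt)
    (fun t => (hf t).deriv) x y

lemma Vf_mul_U (hH1 : H1.IsHermitian) (hH2 : H2.IsHermitian)
    (hU : IsEvolution H1 H2 f1 f2 U) (s τ : ℝ) :
    Vf U τ * U τ s = Vf U s := by
  have key : ∀ t : ℝ, HasDerivAt (fun τ => Vf U τ * U τ s) 0 t := by
    intro t
    have h := (hasDerivAt_Vf hH1 hH2 hU t).mul (hU.2 s t)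
    have e : Complex.I • (Vf U t * Ham H1 H2 f1 f2 t) * U t s
        + Vf U t * ((-Complex.I) • (Ham H1 H2 f1 f2 t * U t s)) = 0 := by
      rw [smul_mul_assoc, mul_smul_comm, neg_smul, mul_assoc, add_neg_cancel]
    rwa [e] at h
  have := const_of_deriv_zero key τ s
  rw [this, hU.1 s, mul_one]

lemma Vf_mul_U_zero (hH1 : H1.IsHermitian) (hH2 : H2.IsHermitian)
    (hU : IsEvolution H1 H2 f1 f2 U) (τ : ℝ) :
    Vf U τ * U τ 0 = 1 := by
  rw [Vf_mul_U hH1 hH2 hU 0 τ, Vf, hU.1 0, star_one]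

lemma U_mul_Vf (hH1 : H1.IsHermitian) (hH2 : H2.IsHermitian)
    (hU : IsEvolution H1 H2 f1 f2 U) (τ : ℝ) :
    U τ 0 * Vf U τ = 1 :=
  mul_eq_one_comm.mp (Vf_mul_U_zero hH1 hH2 hU τ)

lemma U_eq (hH1 : H1.IsHermitian) (hH2 : H2.IsHermitian)
    (hU : IsEvolution H1 H2 f1 f2 U) (h s : ℝ) :
    U h s = U h 0 * Vf U s := by
  have h1 : Vf U h * U h s = Vf U s := Vf_mul_U hH1 hH2 hU s h
  calc U h s = (U h 0 * Vf U h) * U h s := by rw [U_mul_Vf hH1 hH2 hU, one_mul]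
    _ = U h 0 * (Vf U h * U h s) := by rw [mul_assoc]
    _ = U h 0 * Vf U s := by rw [h1]

end TAux

namespace TAux
variable {n : ℕ} (H1 H2 : Mat n) (f1 f2 : ℝ → ℝ)

lemma Conj1_eq (s : ℝ) (B0 : Mat n) :
    Conj1 H1 f1 s B0 = Aif H1 f1 s * B0 * Af H1 f1 s := by
  simp only [Conj1, Aif, Af, eA, aInt, neg_mul]

lemma Conj2_eq (s : ℝ) (B0 : Mat n) :
    Conj2 H2 f2 s B0 = Bf H2 f2 s * B0 * Bif H2 f2 s := by
  simp only [Conj2, Bf, Bif, eA, bInt, neg_mul]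

lemma Conj1_zero (B0 : Mat n) : Conj1 H1 f1 0 B0 = B0 := by
  rw [Conj1_eq]
  simp [Aif, Af, aInt_zero, eA_zero]

lemma Conj2_zero (B0 : Mat n) : Conj2 H2 f2 0 B0 = B0 := by
  rw [Conj2_eq]
  simp [Bif, Bf, bInt_zero, eA_zero]

lemma Conj1_neg (s : ℝ) (B0 : Mat n) : Conj1 H1 f1 s (-B0) = -Conj1 H1 f1 s B0 := by
  simp [Conj1, mul_neg, neg_mul]

lemma Conj2_neg (s : ℝ) (B0 : Mat n) : Conj2 H2 f2 s (-B0) = -Conj2 H2 f2 s B0 := by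
  simp [Conj2, mul_neg, neg_mul]

variable {f1 f2}

lemma hasDerivAt_Conj1 (hf1 : Continuous f1) (B0 : Mat n) (s : ℝ) :
    HasDerivAt (fun s => Conj1 H1 f1 s B0)
      ((Complex.I * (da f1 s : ℝ)) • Conj1 H1 f1 s (matComm H1 B0)) s := by
  have h := ((hasDerivAt_Aif H1 hf1 s).mul_const B0).mul (hasDerivAt_Af H1 hf1 s)
  have e : ((Complex.I * (da f1 s : ℝ)) • (Aif H1 f1 s * H1)) * B0 * Af H1 f1 s
      + (Aif H1 f1 s * B0) * ((-(Complex.I * (da f1 s : ℝ))) • (Af H1 f1 s * H1))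
      = (Complex.I * (da f1 s : ℝ)) • Conj1 H1 f1 s (matComm H1 B0) := by
    simp only [Conj1_eq, matComm, Af, Aif, smul_mul_assoc, mul_smul_comm, sub_mul, mul_sub,
      smul_sub, mul_assoc, eA_comm]
    match_scalars <;> ring
  rw [e] at h
  exact h.congr_of_eventuallyEq (Filter.Eventually.of_forall fun x => (Conj1_eq H1 f1 x B0))

lemma hasDerivAt_Conj2 (hf2 : Continuous f2) (B0 : Mat n) (s : ℝ) :
    HasDerivAt (fun s => Conj2 H2 f2 s B0)
      ((-(Complex.I * (f2 s : ℝ))) • Conj2 H2 f2 s (matComm H2 B0)) s := by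
  have h := ((hasDerivAt_Bf H2 hf2 s).mul_const B0).mul (hasDerivAt_Bif H2 hf2 s)
  have e : ((-(Complex.I * (f2 s : ℝ))) • (Bf H2 f2 s * H2)) * B0 * Bif H2 f2 s
      + (Bf H2 f2 s * B0) * ((Complex.I * (f2 s : ℝ)) • (Bif H2 f2 s * H2))
      = (-(Complex.I * (f2 s : ℝ))) • Conj2 H2 f2 s (matComm H2 B0) := by
    simp only [Conj2_eq, matComm, Bf, Bif, smul_mul_assoc, mul_smul_comm, sub_mul, mul_sub,
      smul_sub, mul_assoc, eA_comm]
    match_scalars <;> ring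
  rw [e] at h
  exact h.congr_of_eventuallyEq (Filter.Eventually.of_forall fun x => (Conj2_eq H2 f2 x B0))

lemma cont_of_hasDerivAt {g g' : ℝ → Mat n} (h : ∀ s, HasDerivAt g (g' s) s) :
    Continuous g :=
  continuous_iff_continuousAt.2 fun s => (h s).continuousAt

lemma cont_Conj1 (hf1 : Continuous f1) (B0 : Mat n) :
    Continuous (fun s => Conj1 H1 f1 s B0) :=
  cont_of_hasDerivAt (fun s => hasDerivAt_Conj1 H1 hf1 B0 s)

lemma cont_Conj2 (hf2 : Continuous f2) (B0 : Mat n) :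
    Continuous (fun s => Conj2 H2 f2 s B0) :=
  cont_of_hasDerivAt (fun s => hasDerivAt_Conj2 H2 hf2 B0 s)

/-- Second-order Taylor expansion with integral remainder. -/
lemma taylor2 {g g' g'' : ℝ → Mat n} (hg : ∀ s, HasDerivAt g (g' s) s)
    (hg' : ∀ s, HasDerivAt g' (g'' s) s) (hcont : Continuous g'') (r : ℝ) :
    g r = g 0 + r • g' 0 + ∫ s in (0:ℝ)..r, (r - s) • g'' s := by
  have hφ : ∀ s : ℝ, HasDerivAt (fun s => (r - s) • g' s + g s) ((r - s) • g'' s) s := by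
    intro s
    have h1 : HasDerivAt (fun s : ℝ => r - s) (-1) s := by
      simpa using (hasDerivAt_id' s).const_sub r
    have h2 := (h1.smul (hg' s)).add (hg s)
    have e : (r - s) • g'' s + (-1 : ℝ) • g' s + g' s = (r - s) • g'' s := by
      module
    rwa [e] at h2
  have hint : IntervalIntegrable (fun s => (r - s) • g'' s) volume 0 r :=
    (Continuous.smul (by fun_prop : Continuous fun s : ℝ => r - s) hcont).intervalIntegrable _ _
  have key := intervalIntegral.integral_eq_sub_of_hasDerivAt (fun s _ => hφ s) hint
  rw [key, sub_self, zero_smul, zero_add, sub_zero]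
  abel

end TAux

namespace TAux
variable {n : ℕ} (H1 H2 : Mat n) {f1 f2 : ℝ → ℝ}

noncomputable def dda (f : ℝ → ℝ) (s : ℝ) : ℝ := deriv f s - deriv f (s/2) / 4

lemma hasDerivAt_da (hf1 : ContDiff ℝ 1 f1) (s : ℝ) :
    HasDerivAt (da f1) (dda f1 s) s := by
  have h0 : HasDerivAt f1 (deriv f1 s) s := (hf1.differentiable one_ne_zero s).hasDerivAt
  have hhalf : HasDerivAt (fun s : ℝ => f1 (s/2)) (deriv f1 (s/2) * (1/2)) s := by
    exact
      HasDerivAt.comp s ((hf1.differentiable one_ne_zero (s/2)).hasDerivAt)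
        ((hasDerivAt_id s).div_const 2)
  have h2 := h0.sub (hhalf.div_const 2)
  have e : deriv f1 s - deriv f1 (s/2) * (1/2) / 2 = dda f1 s := by
    unfold dda; ring
  rwa [e] at h2

lemma cont_da (hf1 : Continuous f1) : Continuous (da f1) := by
  unfold da; fun_prop

lemma cont_dda (hf1 : ContDiff ℝ 1 f1) : Continuous (dda f1) := by
  have := hf1.continuous_deriv le_rfl
  unfold dda; fun_prop

end TAux

namespace TAux
variable {n : ℕ} (H1 H2 : Mat n) {f1 f2 : ℝ → ℝ}

lemma Eg2_eq (hf1 : ContDiff ℝ 1 f1) (hf2 : ContDiff ℝ 1 f2) (r : ℝ) :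
    Eg2 H1 H2 f1 f2 r
      = (Complex.I * ((f2 r : ℝ) : ℂ)) • (Conj1 H1 f1 r H2 - H2)
        + (Complex.I * ((f1 (r/2) / 2 : ℝ) : ℂ)) • (H1 - Conj2 H2 f2 r H1) := by
  have hc1 : Continuous f1 := hf1.continuous
  have hc2 : Continuous f2 := hf2.continuous
  have hcd1 : Continuous (deriv f1) := hf1.continuous_deriv le_rfl
  have hcd2 : Continuous (deriv f2) := hf2.continuous_deriv le_rfl
  -- scalar coefficient continuity facts
  have hda : Continuous (fun s => Complex.I * ((da f1 s : ℝ) : ℂ)) := by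
    have := cont_da (f1 := f1) hc1; fun_prop
  have hdda : Continuous (fun s => Complex.I * ((dda f1 s : ℝ) : ℂ)) := by
    have := cont_dda (f1 := f1) hf1; fun_prop
  have hf2c : Continuous (fun s => -(Complex.I * ((f2 s : ℝ) : ℂ))) := by fun_prop
  have hdf2c : Continuous (fun s => -(Complex.I * ((deriv f2 s : ℝ) : ℂ))) := by fun_prop
  -- first derivative of s ↦ Conj1 s H2
  have hg : ∀ s : ℝ, HasDerivAt (fun s => Conj1 H1 f1 s H2)
      ((Complex.I * ((da f1 s : ℝ) : ℂ)) • Conj1 H1 f1 s (matComm H1 H2)) s :=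
    fun s => hasDerivAt_Conj1 H1 hc1 H2 s
  -- second derivative
  have hgd : ∀ s : ℝ, HasDerivAt
      (fun s => (Complex.I * ((da f1 s : ℝ) : ℂ)) • Conj1 H1 f1 s (matComm H1 H2))
      ((Complex.I * ((da f1 s : ℝ) : ℂ)) • ((Complex.I * ((da f1 s : ℝ) : ℂ)) •
          Conj1 H1 f1 s (matComm H1 (matComm H1 H2)))
        + (Complex.I * ((dda f1 s : ℝ) : ℂ)) • Conj1 H1 f1 s (matComm H1 H2)) s :=
    fun s => (((hasDerivAt_da hf1 s).ofReal_comp.const_mul Complex.I).smul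
      (hasDerivAt_Conj1 H1 hc1 (matComm H1 H2) s))
  have hk : ∀ s : ℝ, HasDerivAt (fun s => Conj2 H2 f2 s H1)
      ((-(Complex.I * ((f2 s : ℝ) : ℂ))) • Conj2 H2 f2 s (matComm H2 H1)) s :=
    fun s => hasDerivAt_Conj2 H2 hc2 H1 s
  have hkd : ∀ s : ℝ, HasDerivAt
      (fun s => (-(Complex.I * ((f2 s : ℝ) : ℂ))) • Conj2 H2 f2 s (matComm H2 H1))
      ((-(Complex.I * ((f2 s : ℝ) : ℂ))) • ((-(Complex.I * ((f2 s : ℝ) : ℂ))) •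
          Conj2 H2 f2 s (matComm H2 (matComm H2 H1)))
        + (-(Complex.I * ((deriv f2 s : ℝ) : ℂ))) • Conj2 H2 f2 s (matComm H2 H1)) s :=
    fun s => ((((hf2.differentiable one_ne_zero s).hasDerivAt.ofReal_comp.const_mul
        Complex.I).neg).smul (hasDerivAt_Conj2 H2 hc2 (matComm H2 H1) s))
  -- Taylor expansions
  have T1 := taylor2 hg hgd (by
    exact ((hda.smul (hda.smul (cont_Conj1 H1 hc1 _)))).add
      (hdda.smul (cont_Conj1 H1 hc1 _))) r
  have T2 := taylor2 hk hkd (by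
    exact ((hf2c.smul (hf2c.smul (cont_Conj2 H2 hc2 _)))).add
      (hdf2c.smul (cont_Conj2 H2 hc2 _))) r
  rw [Conj1_zero] at T1
  rw [Conj2_zero] at T2
  have hda0 : da f1 0 = f1 0 - f1 0 / 2 := by simp [da]
  rw [Conj1_zero, hda0] at T1
  have hConj20 : Conj2 H2 f2 0 (matComm H2 H1) = matComm H2 H1 := Conj2_zero H2 f2 _
  rw [hConj20] at T2
  -- split the two Taylor remainder integrals
  have int1 : IntervalIntegrable (fun s => (r - s) •
      ((Complex.I * ((da f1 s : ℝ) : ℂ)) • ((Complex.I * ((da f1 s : ℝ) : ℂ)) •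
        Conj1 H1 f1 s (matComm H1 (matComm H1 H2))))) volume 0 r :=
    (Continuous.smul (by fun_prop : Continuous fun s : ℝ => r - s) ((hda.smul (hda.smul (cont_Conj1 H1 hc1 _))))).intervalIntegrable _ _
  have int2 : IntervalIntegrable (fun s => (r - s) •
      ((Complex.I * ((dda f1 s : ℝ) : ℂ)) • Conj1 H1 f1 s (matComm H1 H2))) volume 0 r :=
    (Continuous.smul (by fun_prop : Continuous fun s : ℝ => r - s) (hdda.smul (cont_Conj1 H1 hc1 _))).intervalIntegrable _ _
  have int3 : IntervalIntegrable (fun s => (r - s) •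
      ((-(Complex.I * ((f2 s : ℝ) : ℂ))) • ((-(Complex.I * ((f2 s : ℝ) : ℂ))) •
        Conj2 H2 f2 s (matComm H2 (matComm H2 H1))))) volume 0 r :=
    (Continuous.smul (by fun_prop : Continuous fun s : ℝ => r - s) ((hf2c.smul (hf2c.smul (cont_Conj2 H2 hc2 _))))).intervalIntegrable _ _
  have int4 : IntervalIntegrable (fun s => (r - s) •
      ((-(Complex.I * ((deriv f2 s : ℝ) : ℂ))) • Conj2 H2 f2 s (matComm H2 H1))) volume 0 r :=
    (Continuous.smul (by fun_prop : Continuous fun s : ℝ => r - s) (hdf2c.smul (cont_Conj2 H2 hc2 _))).intervalIntegrable _ _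
  have S1 : (∫ s in (0:ℝ)..r, (r - s) •
        ((Complex.I * ((da f1 s : ℝ) : ℂ)) • ((Complex.I * ((da f1 s : ℝ) : ℂ)) •
            Conj1 H1 f1 s (matComm H1 (matComm H1 H2)))
          + (Complex.I * ((dda f1 s : ℝ) : ℂ)) • Conj1 H1 f1 s (matComm H1 H2)))
      = (∫ s in (0:ℝ)..r, (r - s) •
          ((Complex.I * ((da f1 s : ℝ) : ℂ)) • ((Complex.I * ((da f1 s : ℝ) : ℂ)) •
            Conj1 H1 f1 s (matComm H1 (matComm H1 H2)))))
        + (∫ s in (0:ℝ)..r, (r - s) •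
            ((Complex.I * ((dda f1 s : ℝ) : ℂ)) • Conj1 H1 f1 s (matComm H1 H2))) := by
    rw [← intervalIntegral.integral_add int1 int2]
    exact intervalIntegral.integral_congr fun s _ => by rw [smul_add]
  have S2 : (∫ s in (0:ℝ)..r, (r - s) •
        ((-(Complex.I * ((f2 s : ℝ) : ℂ))) • ((-(Complex.I * ((f2 s : ℝ) : ℂ))) •
            Conj2 H2 f2 s (matComm H2 (matComm H2 H1)))
          + (-(Complex.I * ((deriv f2 s : ℝ) : ℂ))) • Conj2 H2 f2 s (matComm H2 H1)))
      = (∫ s in (0:ℝ)..r, (r - s) •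
          ((-(Complex.I * ((f2 s : ℝ) : ℂ))) • ((-(Complex.I * ((f2 s : ℝ) : ℂ))) •
            Conj2 H2 f2 s (matComm H2 (matComm H2 H1)))))
        + (∫ s in (0:ℝ)..r, (r - s) •
            ((-(Complex.I * ((deriv f2 s : ℝ) : ℂ))) • Conj2 H2 f2 s (matComm H2 H1))) := by
    rw [← intervalIntegral.integral_add int3 int4]
    exact intervalIntegral.integral_congr fun s _ => by rw [smul_add]
  rw [S1] at T1
  rw [S2] at T2
  -- FTC facts
  have F2 : (∫ s in (0:ℝ)..r, deriv f2 s) = f2 r - f2 0 :=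
    intervalIntegral.integral_deriv_eq_sub
      (fun x _ => (hf2.differentiable one_ne_zero).differentiableAt)
      (hcd2.intervalIntegrable _ _)
  have F1 : (∫ s in (0:ℝ)..r, deriv f1 (s/2)) = 2 * f1 (r/2) - 2 * f1 0 := by
    have hF : ∀ s : ℝ, HasDerivAt (fun s : ℝ => 2 * f1 (s/2)) (deriv f1 (s/2)) s := by
      intro s
      have h := HasDerivAt.comp s ((hf1.differentiable one_ne_zero (s/2)).hasDerivAt)
        ((hasDerivAt_id s).div_const 2)
      have h2 := h.const_mul (2:ℝ)
      have e : (2:ℝ) * (deriv f1 (s/2) * (1/2)) = deriv f1 (s/2) := by ring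
      rw [e] at h2
      simpa [Function.comp] using h2
    have key := intervalIntegral.integral_eq_sub_of_hasDerivAt (a := (0:ℝ)) (b := r) (f := fun s : ℝ => 2 * f1 (s/2))
      (fun s _ => hF s) ((hcd1.comp (by fun_prop : Continuous fun s : ℝ => s/2)).intervalIntegrable _ _)
    rw [key]
    norm_num
  -- identify the four Eg2 integrals
  have E3 : (∫ s in (0:ℝ)..r, ((f2 r * (deriv f1 s - (1/4) * deriv f1 (s/2)) * (r - s) : ℝ) : ℂ) •
        Conj1 H1 f1 s (matComm H1 H2))
      = -((Complex.I * ((f2 r : ℝ) : ℂ)) • (∫ s in (0:ℝ)..r, (r - s) •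
          ((Complex.I * ((dda f1 s : ℝ) : ℂ)) • Conj1 H1 f1 s (matComm H1 H2)))) := by
    rw [← intervalIntegral.integral_smul, ← intervalIntegral.integral_neg]
    refine intervalIntegral.integral_congr fun s _ => ?_
    match_scalars
    unfold dda
    simp only [Complex.coe_algebraMap]
    push_cast
    linear_combination (((f2 r :ℝ) : ℂ) * ((r:ℂ) - (s:ℂ)) * (((deriv f1 s : ℝ) : ℂ) - ((deriv f1 (s/2) : ℝ) : ℂ)/4)) * Complex.I_mul_I
  have mswap : matComm H2 H1 = -matComm H1 H2 := by
    rw [matComm, matComm, neg_sub]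
  have E5 : Complex.I • (∫ s in (0:ℝ)..r, ((f2 r * (f1 s - (1/2) * f1 (s/2))^2 * (r - s) : ℝ) : ℂ) •
        Conj1 H1 f1 s (matComm H1 (matComm H1 H2)))
      = -((Complex.I * ((f2 r : ℝ) : ℂ)) • (∫ s in (0:ℝ)..r, (r - s) •
          ((Complex.I * ((da f1 s : ℝ) : ℂ)) • ((Complex.I * ((da f1 s : ℝ) : ℂ)) •
            Conj1 H1 f1 s (matComm H1 (matComm H1 H2)))))) := by
    rw [← intervalIntegral.integral_smul, ← intervalIntegral.integral_smul,
      ← intervalIntegral.integral_neg]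
    refine intervalIntegral.integral_congr fun s _ => ?_
    match_scalars
    unfold da
    simp only [Complex.coe_algebraMap]
    push_cast
    linear_combination (Complex.I * ((f2 r : ℝ) : ℂ) * ((r:ℂ) - (s:ℂ)) *
      (((f1 s : ℝ) : ℂ) - ((f1 (s/2) : ℝ) : ℂ)/2)^2) * Complex.I_mul_I
  have E4 : (∫ s in (0:ℝ)..r, (((1/2) * f1 (r/2) * deriv f2 s * (r - s) : ℝ) : ℂ) •
        Conj2 H2 f2 s (matComm H1 H2))
      = -((Complex.I * ((f1 (r/2) / 2 : ℝ) : ℂ)) • (∫ s in (0:ℝ)..r, (r - s) •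
          ((-(Complex.I * ((deriv f2 s : ℝ) : ℂ))) • Conj2 H2 f2 s (matComm H2 H1)))) := by
    rw [← intervalIntegral.integral_smul, ← intervalIntegral.integral_neg]
    refine intervalIntegral.integral_congr fun s _ => ?_
    rw [mswap, Conj2_neg]
    match_scalars
    simp only [Complex.coe_algebraMap]
    push_cast
    linear_combination (((f1 (r/2) : ℝ) : ℂ) / 2 * ((r:ℂ) - (s:ℂ)) *
      ((deriv f2 s : ℝ) : ℂ)) * Complex.I_mul_I
  have E6 : (Complex.I / 2) • (∫ s in (0:ℝ)..r, ((f1 (r/2) * (f2 s)^2 * (r - s) : ℝ) : ℂ) •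
        Conj2 H2 f2 s (matComm H2 (matComm H2 H1)))
      = -((Complex.I * ((f1 (r/2) / 2 : ℝ) : ℂ)) • (∫ s in (0:ℝ)..r, (r - s) •
          ((-(Complex.I * ((f2 s : ℝ) : ℂ))) • ((-(Complex.I * ((f2 s : ℝ) : ℂ))) •
            Conj2 H2 f2 s (matComm H2 (matComm H2 H1)))))) := by
    rw [← intervalIntegral.integral_smul, ← intervalIntegral.integral_smul,
      ← intervalIntegral.integral_neg]
    refine intervalIntegral.integral_congr fun s _ => ?_
    match_scalars
    simp only [Complex.coe_algebraMap]
    push_cast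
    linear_combination (Complex.I * ((f1 (r/2) : ℝ) : ℂ) / 2 * ((r:ℂ) - (s:ℂ)) *
      ((f2 s : ℝ) : ℂ)^2) * Complex.I_mul_I
  have e0 : r • ((-(Complex.I * ((f2 0 : ℝ) : ℂ))) • matComm H2 H1)
      = r • ((Complex.I * ((f2 0 : ℝ) : ℂ)) • matComm H1 H2) := by
    rw [mswap, smul_neg, neg_smul, neg_neg]
  rw [e0] at T2
  simp only [Eg2]
  rw [F2, F1, E3, E4, E5, E6, T1, T2]
  match_scalars <;> (try simp only [Complex.coe_algebraMap]) <;> push_cast <;>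
    first
      | ring1
      | linear_combination (-((r:ℂ) * ((f2 r : ℝ) : ℂ) * ((f1 0 : ℝ) : ℂ) / 2
          - (r:ℂ) * ((f1 (r/2) : ℝ) : ℂ) * ((f2 0 : ℝ) : ℂ) / 2)) * Complex.I_mul_I

end TAux

namespace TAux
variable {n : ℕ} (H1 H2 : Mat n) (f1 f2 : ℝ → ℝ)

lemma eA_comm' (M : Mat n) (z : ℂ) (X : Mat n) :
    M * (eA M z * X) = eA M z * (M * X) := by
  rw [← mul_assoc, eA_comm, mul_assoc]

lemma Dd_eq (s : ℝ) :
    Dd H1 H2 f1 f2 s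
      = Af H1 f1 s * (((Complex.I * ((f2 s : ℝ) : ℂ)) • (Conj1 H1 f1 s H2 - H2)
          + (Complex.I * ((f1 (s/2) / 2 : ℝ) : ℂ)) • (H1 - Conj2 H2 f2 s H1))
        * (Bf H2 f2 s * Cf H1 f1 s)) := by
  simp only [Dd, Wf, Conj1_eq, Conj2_eq, Af, Aif, Bf, Bif, Cf, sub_mul, mul_sub, smul_sub,
    add_mul, mul_add, smul_add, smul_mul_assoc, mul_smul_comm, mul_assoc,
    eA_cancel₁, eA_cancel₂, eA_comm']

end TAux

/-- **Error representation of the second-order generalized Trotter formula.** -/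
theorem error_representation_second_order_generalized_Trotter
    {n : ℕ} (hn : 0 < n) (H1 H2 : Mat n)
    (hH1 : H1.IsHermitian) (hH2 : H2.IsHermitian)
    (f1 f2 : ℝ → ℝ) (hf1 : ContDiff ℝ 1 f1) (hf2 : ContDiff ℝ 1 f2)
    (U : ℝ → ℝ → Mat n) (hU : IsEvolution H1 H2 f1 f2 U)
    (h : ℝ) (hh : 0 ≤ h) :
    Ug2 H1 H2 f1 f2 h 0 - U h 0 =
      ∫ s in (0:ℝ)..h,
        U h s * mexp ((-Complex.I * ((∫ s' in (s/2)..s, f1 s' : ℝ) : ℂ)) • H1) *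
          Eg2 H1 H2 f1 f2 s *
          mexp ((-Complex.I * ((∫ s' in (0:ℝ)..s, f2 s' : ℝ) : ℂ)) • H2) *
          mexp ((-Complex.I * ((∫ s' in (0:ℝ)..(s/2), f1 s' : ℝ) : ℂ)) • H1) := by
  open TAux in
  have hc1 : Continuous f1 := hf1.continuous
  have hc2 : Continuous f2 := hf2.continuous
  have hWd : ∀ s, HasDerivAt (Wf H1 H2 f1 f2) (Wd H1 H2 f1 f2 s) s :=
    hasDerivAt_Wf H1 H2 f1 f2 hc1 hc2
  have hV : ∀ s, HasDerivAt (Vf U) (Complex.I • (Vf U s * Ham H1 H2 f1 f2 s)) s :=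
    hasDerivAt_Vf hH1 hH2 hU
  have hΦ : ∀ s, HasDerivAt (fun s => U h 0 * (Vf U s * Wf H1 H2 f1 f2 s))
      (U h 0 * (Vf U s * Dd H1 H2 f1 f2 s)) s := by
    intro s
    have hd := ((hV s).mul (hWd s)).const_mul (U h 0)
    have e : U h 0 * (Complex.I • (Vf U s * Ham H1 H2 f1 f2 s) * Wf H1 H2 f1 f2 s
          + Vf U s * Wd H1 H2 f1 f2 s)
        = U h 0 * (Vf U s * Dd H1 H2 f1 f2 s) := by
      rw [← defect H1 H2 f1 f2 s, smul_mul_assoc, mul_assoc, ← mul_smul_comm, ← mul_add]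
    rwa [e] at hd
  have cV : Continuous (Vf U) := cont_of_hasDerivAt hV
  have cA : Continuous (Af H1 f1) := cont_of_hasDerivAt (fun s => hasDerivAt_Af H1 hc1 s)
  have cB : Continuous (Bf H2 f2) := cont_of_hasDerivAt (fun s => hasDerivAt_Bf H2 hc2 s)
  have cC : Continuous (Cf H1 f1) := cont_of_hasDerivAt (fun s => hasDerivAt_Cf H1 hc1 s)
  have hcont : Continuous (fun s => U h 0 * (Vf U s * Dd H1 H2 f1 f2 s)) := by
    unfold Dd Wf
    fun_prop
  have key := intervalIntegral.integral_eq_sub_of_hasDerivAt (a := (0:ℝ)) (b := h)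
    (fun s _ => hΦ s) (hcont.intervalIntegrable _ _)
  have eh : U h 0 * (Vf U h * Wf H1 H2 f1 f2 h) = Ug2 H1 H2 f1 f2 h 0 := by
    rw [← mul_assoc, U_mul_Vf hH1 hH2 hU, one_mul]
    simp only [Ug2, Wf, Af, Bf, Cf, eA, aInt, bInt, cInt, neg_mul, zero_add, mul_assoc]
  have e0' : U h 0 * (Vf U 0 * Wf H1 H2 f1 f2 0) = U h 0 := by
    have w0 : Wf H1 H2 f1 f2 0 = 1 := by
      simp [Wf, Af, Bf, Cf, aInt_zero, bInt_zero, cInt, eA_zero]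
    rw [Vf, hU.1 0, star_one, one_mul, w0, mul_one]
  rw [eh, e0'] at key
  rw [← key]
  refine intervalIntegral.integral_congr fun s _ => ?_
  have hDd : Dd H1 H2 f1 f2 s
      = Af H1 f1 s * (Eg2 H1 H2 f1 f2 s * (Bf H2 f2 s * Cf H1 f1 s)) := by
    rw [Dd_eq, ← Eg2_eq H1 H2 hf1 hf2 s]
  rw [← mul_assoc, ← U_eq hH1 hH2 hU h s, hDd]
  simp only [Af, Bf, Cf, eA, aInt, bInt, cInt, neg_mul, mul_assoc]
end
end

section
/- Operator norm error of one first-order generalized Trotter step: suppose F1, F2 ≥ 0 satisfy |f1(t)| ≤ F1 and |f2(t)| ≤ F2 for all t ∈ [0,h]. Then ‖U_{g,1}(h,0) - U(h,0)‖ ≤ (1/2) F1 F2 ‖[H1,H2]‖ h². -/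
open scoped Matrix.Norms.L2Operator
open MeasureTheory

noncomputable section

variable {n : ℕ}


lemma hasDerivAt_mexp_smul (A : Mat n) {g : ℝ → ℂ} {g' : ℂ} {t : ℝ}
    (hg : HasDerivAt g g' t) :
    HasDerivAt (fun s => mexp (g s • A)) (g' • (A * mexp (g t • A))) t := by
  have h1 : HasDerivAt (fun u : ℂ => NormedSpace.exp (u • A))
      (A * NormedSpace.exp (g t • A)) (g t) := hasDerivAt_exp_smul_const' A (g t)
  exact h1.scomp t hg

lemma mexp_norm_one [Nonempty (Fin n)] {H : Mat n} (hH : H.IsHermitian) (c : ℂ)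
    (hc : star c = -c) : ‖mexp (c • H)‖ = 1 ∧ star (mexp (c • H)) * mexp (c • H) = 1 := by
  have hstar : star (mexp (c • H)) = mexp (-(c • H)) := by
    rw [mexp, mexp, Matrix.star_eq_conjTranspose, ← Matrix.exp_conjTranspose]
    congr 1
    rw [Matrix.conjTranspose_smul, hH.eq, hc, neg_smul]
  have hmul : star (mexp (c • H)) * mexp (c • H) = 1 := by
    rw [hstar, mexp, mexp, ← Matrix.exp_add_of_commute (-(c • H)) (c • H) (Commute.neg_left (Commute.refl _))]
    simp [NormedSpace.exp_zero]
  refine ⟨?_, hmul⟩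
  have h2 : ‖mexp (c • H)‖ * ‖mexp (c • H)‖ = 1 := by
    rw [← CStarRing.norm_star_mul_self, hmul, Matrix.cstar_norm_def, map_one, norm_one]
  nlinarith [norm_nonneg (mexp (c • H))]

lemma star_neg_I_mul (c : ℝ) : star (-Complex.I * (c : ℂ)) = -(-Complex.I * c) := by
  simp [star_mul', Complex.star_def, Complex.conj_ofReal]

lemma comm_mexp_bound [Nonempty (Fin n)] (H1 H2 : Mat n) (hH2 : H2.IsHermitian) (c : ℝ) :
    ‖H1 * mexp ((-Complex.I * (c:ℂ)) • H2) - mexp ((-Complex.I * (c:ℂ)) • H2) * H1‖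
      ≤ |c| * ‖matComm H1 H2‖ := by
  set E : ℝ → Mat n := fun τ => mexp ((-Complex.I * (τ:ℂ)) • H2) with hE
  have hcomm : ∀ τ : ℝ, E τ * H2 = H2 * E τ := fun τ =>
    (((Commute.refl H2).smul_left _).exp_left)
  have hg1 : ∀ τ : ℝ, HasDerivAt (fun τ : ℝ => -Complex.I * (τ:ℂ)) (-Complex.I) τ := by
    intro τ
    simpa using (Complex.ofRealCLM.hasDerivAt (x := τ)).const_mul (-Complex.I)
  have hEderiv : ∀ τ : ℝ, HasDerivAt E ((-Complex.I) • (H2 * E τ)) τ := fun τ =>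
    hasDerivAt_mexp_smul H2 (hg1 τ)
  have hEcont : Continuous E := continuous_iff_continuousAt.2 fun τ => (hEderiv τ).continuousAt
  have hEnorm : ∀ τ : ℝ, ‖E τ‖ = 1 := fun τ =>
    (mexp_norm_one hH2 _ (star_neg_I_mul τ)).1
  set Ψ : ℝ → Mat n := fun τ => E τ * H1 * E (c - τ) with hΨ
  set Ψ' : ℝ → Mat n := fun τ => E τ * ((-Complex.I) • (H2 * H1 - H1 * H2)) * E (c - τ) with hΨ'
  have hderiv : ∀ τ : ℝ, HasDerivAt Ψ (Ψ' τ) τ := by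
    intro τ
    have hg2 : HasDerivAt (fun τ : ℝ => -Complex.I * ((c - τ : ℝ):ℂ)) Complex.I τ := by
      have h0 : HasDerivAt (fun τ : ℝ => ((c - τ : ℝ):ℂ)) (-1) τ := by
        simp_rw [Complex.ofReal_sub]
        simpa using (Complex.ofRealCLM.hasDerivAt (x := τ)).const_sub (c : ℂ)
      simpa using h0.const_mul (-Complex.I)
    have h2 : HasDerivAt (fun τ => E (c - τ)) (Complex.I • (H2 * E (c - τ))) τ :=
      hasDerivAt_mexp_smul H2 hg2
    have hmain := (((hEderiv τ).mul (hasDerivAt_const τ H1)).mul h2)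
    refine hmain.congr_deriv ?_
    rw [← hcomm τ]
    simp only [hΨ', Pi.mul_apply, mul_zero, add_zero, smul_mul_assoc, mul_smul_comm, mul_sub, sub_mul,
      smul_sub, mul_assoc]
    module
  have hΨ'cont : Continuous Ψ' :=
    (hEcont.mul continuous_const).mul (hEcont.comp (continuous_const.sub continuous_id))
  have hFTC : ∫ τ in (0:ℝ)..c, Ψ' τ = Ψ c - Ψ 0 :=
    intervalIntegral.integral_eq_sub_of_hasDerivAt (fun τ _ => hderiv τ)
      (hΨ'cont.intervalIntegrable 0 c)
  have hΨ0 : Ψ 0 = H1 * E c := by simp [hΨ, hE, mexp, NormedSpace.exp_zero]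
  have hΨc : Ψ c = E c * H1 := by simp [hΨ, hE, mexp, NormedSpace.exp_zero]
  have hbound : ∀ τ ∈ Set.uIoc (0:ℝ) c, ‖Ψ' τ‖ ≤ ‖matComm H1 H2‖ := by
    intro τ _
    calc ‖Ψ' τ‖ ≤ ‖E τ * ((-Complex.I) • (H2 * H1 - H1 * H2))‖ * ‖E (c - τ)‖ := norm_mul_le _ _
      _ ≤ ‖E τ‖ * ‖(-Complex.I) • (H2 * H1 - H1 * H2)‖ * ‖E (c - τ)‖ :=
          mul_le_mul_of_nonneg_right (norm_mul_le _ _) (norm_nonneg _)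
      _ = ‖matComm H1 H2‖ := by
          rw [hEnorm τ, hEnorm (c - τ), norm_smul]
          have : H2 * H1 - H1 * H2 = -(matComm H1 H2) := by simp [matComm]
          simp [this]
  have := intervalIntegral.norm_integral_le_of_norm_le_const hbound
  rw [hFTC, hΨ0, hΨc] at this
  calc ‖H1 * E c - E c * H1‖ = ‖E c * H1 - H1 * E c‖ := by rw [← norm_neg]; congr 1; abel
    _ ≤ ‖matComm H1 H2‖ * |c - 0| := this
    _ = |c| * ‖matComm H1 H2‖ := by rw [sub_zero, mul_comm]


/-- **Operator norm error of one first-order generalized Trotter step.** -/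
theorem opnorm_error_first_order_generalized_Trotter_step
    {n : ℕ} (hn : 0 < n) (H1 H2 : Mat n)
    (hH1 : H1.IsHermitian) (hH2 : H2.IsHermitian)
    (f1 f2 : ℝ → ℝ) (hf1 : ContDiff ℝ 1 f1) (hf2 : ContDiff ℝ 1 f2)
    (U : ℝ → ℝ → Mat n) (hU : IsEvolution H1 H2 f1 f2 U)
    (h : ℝ) (hh : 0 < h)
    (F1 F2 : ℝ) (hF1 : 0 ≤ F1) (hF2 : 0 ≤ F2)
    (hb1 : ∀ t ∈ Set.Icc (0:ℝ) h, |f1 t| ≤ F1)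
    (hb2 : ∀ t ∈ Set.Icc (0:ℝ) h, |f2 t| ≤ F2) :
    ‖Ug1 H1 H2 f1 f2 h 0 - U h 0‖ ≤ (1/2) * F1 * F2 * ‖matComm H1 H2‖ * h^2 := by
  haveI : Nonempty (Fin n) := ⟨⟨0, hn⟩⟩
  obtain ⟨hU0, hUderiv⟩ := hU
  have hcf1 : Continuous f1 := hf1.continuous
  have hcf2 : Continuous f2 := hf2.continuous
  set C := ‖matComm H1 H2‖ with hC
  have hC0 : 0 ≤ C := norm_nonneg _
  -- antiderivatives
  set g1 : ℝ → ℝ := fun t => ∫ s in (0:ℝ)..t, f1 s with hg1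
  set g2 : ℝ → ℝ := fun t => ∫ s in (0:ℝ)..t, f2 s with hg2
  have hg1d : ∀ t : ℝ, HasDerivAt g1 (f1 t) t := fun t =>
    intervalIntegral.integral_hasDerivAt_right (hcf1.intervalIntegrable 0 t)
      (hcf1.stronglyMeasurableAtFilter _ _) hcf1.continuousAt
  have hg2d : ∀ t : ℝ, HasDerivAt g2 (f2 t) t := fun t =>
    intervalIntegral.integral_hasDerivAt_right (hcf2.intervalIntegrable 0 t)
      (hcf2.stronglyMeasurableAtFilter _ _) hcf2.continuousAt
  -- complex-phase derivatives
  have hp1 : ∀ t : ℝ, HasDerivAt (fun t => -Complex.I * ((g1 t : ℝ):ℂ))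
      (-Complex.I * (f1 t : ℂ)) t := by
    intro t
    have := (Complex.ofRealCLM.hasDerivAt (x := g1 t)).scomp t (hg1d t)
    simpa using this.const_mul (-Complex.I)
  have hp2 : ∀ t : ℝ, HasDerivAt (fun t => -Complex.I * ((g2 t : ℝ):ℂ))
      (-Complex.I * (f2 t : ℂ)) t := by
    intro t
    have := (Complex.ofRealCLM.hasDerivAt (x := g2 t)).scomp t (hg2d t)
    simpa using this.const_mul (-Complex.I)
  -- the pieces
  set E1 : ℝ → Mat n := fun t => mexp ((-Complex.I * ((g1 t : ℝ):ℂ)) • H1) with hE1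
  set E2 : ℝ → Mat n := fun t => mexp ((-Complex.I * ((g2 t : ℝ):ℂ)) • H2) with hE2
  have hE1d : ∀ t : ℝ, HasDerivAt E1 ((-Complex.I * (f1 t : ℂ)) • (H1 * E1 t)) t := fun t =>
    hasDerivAt_mexp_smul H1 (hp1 t)
  have hE2d : ∀ t : ℝ, HasDerivAt E2 ((-Complex.I * (f2 t : ℂ)) • (H2 * E2 t)) t := fun t =>
    hasDerivAt_mexp_smul H2 (hp2 t)
  have hE1cont : Continuous E1 := continuous_iff_continuousAt.2 fun t => (hE1d t).continuousAt
  have hE2cont : Continuous E2 := continuous_iff_continuousAt.2 fun t => (hE2d t).continuousAt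
  have hE1norm : ∀ t : ℝ, ‖E1 t‖ = 1 := fun t => (mexp_norm_one hH1 _ (star_neg_I_mul _)).1
  have hE2norm : ∀ t : ℝ, ‖E2 t‖ = 1 := fun t => (mexp_norm_one hH2 _ (star_neg_I_mul _)).1
  set V : ℝ → Mat n := fun t => E2 t * E1 t with hV
  have hVd : ∀ t : ℝ, HasDerivAt V
      (((-Complex.I * (f2 t : ℂ)) • (H2 * E2 t)) * E1 t
        + E2 t * ((-Complex.I * (f1 t : ℂ)) • (H1 * E1 t))) t := fun t =>
    (hE2d t).mul (hE1d t)
  set W : ℝ → Mat n := fun t => U t 0 with hW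
  have hWd : ∀ t : ℝ, HasDerivAt W ((-Complex.I) • (Ham H1 H2 f1 f2 t * W t)) t := fun t =>
    hUderiv 0 t
  have hWcont : Continuous W := continuous_iff_continuousAt.2 fun t => (hWd t).continuousAt
  have hW0 : W 0 = 1 := hU0 0
  -- Ham is self adjoint
  have hHamstar : ∀ t : ℝ, star (Ham H1 H2 f1 f2 t) = Ham H1 H2 f1 f2 t := by
    intro t
    simp only [Ham, star_add, star_smul, Matrix.star_eq_conjTranspose, hH1.eq, hH2.eq,
      Complex.star_def, Complex.conj_ofReal]
  -- unitarity of W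
  have hWW : ∀ s : ℝ, star (W s) * W s = 1 := by
    have hPd : ∀ s : ℝ, HasDerivAt (fun s => star (W s) * W s) 0 s := by
      intro s
      have hd := ((hWd s).star.mul (hWd s))
      refine hd.congr_deriv ?_
      rw [star_smul, star_mul, hHamstar s]
      simp only [star_neg, Complex.star_def, Complex.conj_I, neg_neg, smul_mul_assoc,
        mul_smul_comm, ← mul_assoc]
      module
    have hconst := is_const_of_deriv_eq_zero
      (fun s => (hPd s).differentiableAt) (fun s => (hPd s).deriv)
    intro s
    calc star (W s) * W s = star (W 0) * W 0 := hconst s 0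
      _ = 1 := by rw [hW0]; simp
  have hWW' : ∀ s : ℝ, W s * star (W s) = 1 := fun s => mul_eq_one_comm.mp (hWW s)
  have hWnorm : ∀ s : ℝ, ‖W s‖ = 1 := by
    intro s
    have h2 : ‖W s‖ * ‖W s‖ = 1 := by
      rw [← CStarRing.norm_star_mul_self, hWW s, Matrix.cstar_norm_def, map_one, norm_one]
    nlinarith [norm_nonneg (W s)]
  -- the remainder
  set R : ℝ → Mat n := fun s =>
    (Complex.I * (f1 s : ℂ)) • ((H1 * E2 s - E2 s * H1) * E1 s) with hR
  have hRcont : Continuous R := by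
    refine Continuous.smul (f := fun s => Complex.I * (f1 s : ℂ))
      (g := fun s => (H1 * E2 s - E2 s * H1) * E1 s) ?_ ?_
    · exact continuous_const.mul (Complex.continuous_ofReal.comp hcf1)
    · exact ((continuous_const.mul hE2cont).sub (hE2cont.mul continuous_const)).mul hE1cont
  -- derivative of G
  set G : ℝ → Mat n := fun s => star (W s) * V s with hG
  have hGd : ∀ s : ℝ, HasDerivAt G (star (W s) * R s) s := by
    intro s
    have hd := (hWd s).star.mul (hVd s)
    refine hd.congr_deriv ?_
    rw [star_smul, star_mul, hHamstar s]
    simp only [star_neg, Complex.star_def, Complex.conj_I, neg_neg, Ham, hR, hV]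
    simp only [mul_add, add_mul, mul_sub, sub_mul, smul_mul_assoc, mul_smul_comm, smul_add,
      smul_sub, smul_smul, mul_assoc]
    module
  have hG0 : G 0 = 1 := by
    have hg10 : g1 0 = 0 := intervalIntegral.integral_same
    have hg20 : g2 0 = 0 := intervalIntegral.integral_same
    simp [hG, hV, hE1, hE2, hg10, hg20, hW0, mexp, NormedSpace.exp_zero]
  have hGcont : Continuous fun s => star (W s) * R s :=
    (continuous_star.comp hWcont).mul hRcont
  have hFTC : ∫ s in (0:ℝ)..h, star (W s) * R s = G h - G 0 :=
    intervalIntegral.integral_eq_sub_of_hasDerivAt (fun s _ => hGd s)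
      (hGcont.intervalIntegrable 0 h)
  have hWstarnorm : ∀ s : ℝ, ‖star (W s)‖ = 1 := by
    intro s
    have h2 : ‖star (W s)‖ * ‖star (W s)‖ = 1 := by
      rw [← CStarRing.norm_star_mul_self, star_star, hWW' s, Matrix.cstar_norm_def, map_one,
        norm_one]
    nlinarith [norm_nonneg (star (W s))]
  -- pointwise bound
  have hbnd : ∀ s ∈ Set.uIoc (0:ℝ) h, ‖star (W s) * R s‖ ≤ (F1 * F2 * C) * s := by
    intro s hs
    rw [Set.uIoc_of_le hh.le] at hs
    have hs0 : 0 < s := hs.1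
    have hsh : s ≤ h := hs.2
    have hsIcc : s ∈ Set.Icc (0:ℝ) h := ⟨hs0.le, hsh⟩
    have hgs : |g2 s| ≤ F2 * s := by
      have := intervalIntegral.norm_integral_le_of_norm_le_const (a := 0) (b := s)
        (C := F2) (f := f2) ?_
      · rw [sub_zero] at this
        calc |g2 s| = ‖∫ x in (0:ℝ)..s, f2 x‖ := rfl
          _ ≤ F2 * |s| := this
          _ = F2 * s := by rw [abs_of_pos hs0]
      · intro x hx
        rw [Set.uIoc_of_le hs0.le] at hx
        exact hb2 x ⟨hx.1.le, hx.2.trans hsh⟩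
    have hcommb : ‖H1 * E2 s - E2 s * H1‖ ≤ |g2 s| * C :=
      comm_mexp_bound H1 H2 hH2 (g2 s)
    have hf1b : |f1 s| ≤ F1 := hb1 s hsIcc
    calc ‖star (W s) * R s‖ ≤ ‖star (W s)‖ * ‖R s‖ := norm_mul_le _ _
      _ = ‖R s‖ := by rw [hWstarnorm s, one_mul]
      _ = ‖Complex.I * (f1 s : ℂ)‖ * ‖(H1 * E2 s - E2 s * H1) * E1 s‖ := norm_smul _ _
      _ ≤ |f1 s| * (‖H1 * E2 s - E2 s * H1‖ * ‖E1 s‖) := by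
          refine mul_le_mul ?_ (norm_mul_le _ _) (norm_nonneg _) (abs_nonneg _)
          rw [norm_mul, Complex.norm_I, one_mul, Complex.norm_real]
          exact le_refl _
      _ = |f1 s| * ‖H1 * E2 s - E2 s * H1‖ := by rw [hE1norm s, mul_one]
      _ ≤ F1 * (|g2 s| * C) := by
          refine mul_le_mul hf1b hcommb (norm_nonneg _) hF1
      _ ≤ F1 * ((F2 * s) * C) := by
          refine mul_le_mul_of_nonneg_left (mul_le_mul_of_nonneg_right hgs hC0) hF1
      _ = (F1 * F2 * C) * s := by ring
  -- the integral bound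
  have hintb : IntervalIntegrable (fun s => (F1 * F2 * C) * s) volume 0 h :=
    (continuous_const.mul continuous_id).intervalIntegrable 0 h
  have hmain : ‖G h - G 0‖ ≤ |∫ s in (0:ℝ)..h, (F1 * F2 * C) * s| := by
    rw [← hFTC]
    refine (intervalIntegral.norm_integral_le_of_norm_le hh.le ?_ hintb).trans (le_abs_self _)
    exact ae_of_all _ (fun s hs => hbnd s (by rwa [Set.uIoc_of_le hh.le]))
  have hval : ∫ s in (0:ℝ)..h, (F1 * F2 * C) * s = (F1 * F2 * C) * (h^2 / 2) := by
    rw [intervalIntegral.integral_const_mul, integral_id]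
    ring
  rw [hval] at hmain
  have habs : |(F1 * F2 * C) * (h^2 / 2)| = (F1 * F2 * C) * (h^2 / 2) := by
    apply abs_of_nonneg
    positivity
  rw [habs] at hmain
  -- assemble
  have hUg : Ug1 H1 H2 f1 f2 h 0 = V h := rfl
  have hdiff : V h - W h = W h * (G h - G 0) := by
    rw [hG0, mul_sub, mul_one, hG, ← mul_assoc, hWW' h, one_mul]
  calc ‖Ug1 H1 H2 f1 f2 h 0 - U h 0‖ = ‖V h - W h‖ := by rw [hUg]
    _ = ‖W h * (G h - G 0)‖ := by rw [hdiff]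
    _ ≤ ‖W h‖ * ‖G h - G 0‖ := norm_mul_le _ _
    _ = ‖G h - G 0‖ := by rw [hWnorm h, one_mul]
    _ ≤ (F1 * F2 * C) * (h^2 / 2) := hmain
    _ = (1/2) * F1 * F2 * C * h^2 := by ring
end
end

section
/- Global operator norm error bounds for the first-order Trotter formulae: let T > 0, let L be a positive integer, and suppose F1, F2, F1', F2' ≥ 0 satisfy |f1(t)| ≤ F1, |f2(t)| ≤ F2, |f1'(t)| ≤ F1', |f2'(t)| ≤ F2' for all t ∈ [0,T]. Then ‖∏_{l=1}^{L} U_{s,1}(lT/L, (l-1)T/L) - U(T,0)‖ ≤ α_s T²/L + β_s T³/L², where α_s = (1/2) F1' ‖H1‖ + (1/2) F2' ‖H2‖ + (1/2) F1 F2 ‖[H1,H2]‖ and β_s = (1/6) F1 F2' ‖[H1,H2]‖, and ‖∏_{l=1}^{L} U_{g,1}(lT/L, (l-1)T/L) - U(T,0)‖ ≤ (1/2) F1 F2 ‖[H1,H2]‖ T²/L. (In the products, the factor with larger l is applied later, i.e., stands to the left.) -/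
open scoped Matrix.Norms.L2Operator
open MeasureTheory

noncomputable section

/-- `prodSteps f L = f (L-1) * ⋯ * f 1 * f 0` : the ordered product of the matrices
`f 0, …, f (L-1)`, where the factor with larger index stands to the left. -/
noncomputable def prodSteps {n : ℕ} (f : ℕ → Mat n) : ℕ → Mat n
  | 0 => 1
  | k + 1 => f k * prodSteps f k

/-- The `L`-step Trotter product `∏_{l=1}^{L} step(l T/L, (l-1) T/L)`, with the factor with
larger `l` standing to the left. -/
noncomputable def trotterProd {n : ℕ} (step : ℝ → ℝ → Mat n) (T : ℝ) (L : ℕ) : Mat n :=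
  prodSteps (fun l => step ((((l : ℝ) + 1) * T) / (L : ℝ)) (((l : ℝ) * T) / (L : ℝ))) L

namespace TrotterAux
variable {n : ℕ}

instance : NormedStarGroup (Mat n) := ⟨fun x => le_of_eq (Matrix.l2_opNorm_conjTranspose x)⟩

lemma hasDerivAt_mexp (H : Mat n) {φ : ℝ → ℂ} {φ' : ℂ} {τ : ℝ} (hφ : HasDerivAt φ φ' τ) :
    HasDerivAt (fun τ => mexp (φ τ • H)) (φ' • (H * mexp (φ τ • H))) τ :=
  (hasDerivAt_exp_smul_const' H (φ τ)).scomp τ hφ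

lemma star_mexp (A : Mat n) : star (mexp A) = mexp (star A) := by
  simp [mexp, NormedSpace.star_exp]

lemma mexp_mul_mexp_neg (A : Mat n) : mexp A * mexp (-A) = 1 := by
  rw [mexp, mexp, ← Matrix.exp_add_of_commute _ _ (Commute.neg_right (Commute.refl A))]
  simp [NormedSpace.exp_zero]

lemma norm_one_le : ‖(1 : Mat n)‖ ≤ 1 := by
  have h := CStarRing.norm_star_mul_self (x := (1 : Mat n))
  simp only [star_one, mul_one] at h
  nlinarith [norm_nonneg (1 : Mat n)]

lemma norm_le_one_of_star_mul_self {M : Mat n} (h : star M * M = 1) : ‖M‖ ≤ 1 := by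
  have h2 := CStarRing.norm_star_mul_self (x := M)
  rw [h] at h2
  nlinarith [norm_nonneg M, norm_one_le (n := n)]

lemma star_mexp_skew {X : Mat n} (hX : star X = -X) : star (mexp X) = mexp (-X) := by
  rw [star_mexp, hX]

lemma star_mul_self_mexp_skew {X : Mat n} (hX : star X = -X) : star (mexp X) * mexp X = 1 := by
  rw [star_mexp_skew hX]
  have := mexp_mul_mexp_neg (-X)
  simpa using this

lemma mul_star_self_mexp_skew {X : Mat n} (hX : star X = -X) : mexp X * star (mexp X) = 1 := by
  rw [star_mexp_skew hX, mexp_mul_mexp_neg]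

lemma skew_smul (c : ℝ) {H : Mat n} (hH : H.IsHermitian) :
    star ((-Complex.I * (c : ℂ)) • H) = -((-Complex.I * (c : ℂ)) • H) := by
  rw [star_smul, show star H = H from hH, ← neg_smul]
  congr 1
  simp [Complex.ext_iff]

lemma norm_mexp_skew (c : ℝ) {H : Mat n} (hH : H.IsHermitian) :
    ‖mexp ((-Complex.I * (c : ℂ)) • H)‖ ≤ 1 :=
  norm_le_one_of_star_mul_self (star_mul_self_mexp_skew (skew_smul c hH))

lemma norm_star_le {M : Mat n} (h : ‖M‖ ≤ 1) : ‖star M‖ ≤ 1 := by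
  rwa [norm_star]

end TrotterAux

section Evo
variable {n : ℕ} {H1 H2 : Mat n} {f1 f2 : ℝ → ℝ} {U : ℝ → ℝ → Mat n}

lemma star_Ham (hH1 : H1.IsHermitian) (hH2 : H2.IsHermitian) (t : ℝ) :
    star (Ham H1 H2 f1 f2 t) = Ham H1 H2 f1 f2 t := by
  simp [Ham, star_add, star_smul, Complex.star_def, Complex.conj_ofReal,
    show star H1 = H1 from hH1, show star H2 = H2 from hH2]

lemma hasDerivAt_starU_mul (hH1 : H1.IsHermitian) (hH2 : H2.IsHermitian)
    (hU : IsEvolution H1 H2 f1 f2 U) (t : ℝ) {X R : ℝ → Mat n}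
    (hX : ∀ τ, HasDerivAt X ((-Complex.I) • (Ham H1 H2 f1 f2 τ * X τ) + R τ) τ) (τ : ℝ) :
    HasDerivAt (fun s => star (U s t) * X s) (star (U τ t) * R τ) τ := by
  have h1 : HasDerivAt (fun s => star (U s t))
      (star ((-Complex.I) • (Ham H1 H2 f1 f2 τ * U τ t))) τ := (hU.2 t τ).star
  have h2 : HasDerivAt (fun s => star (U s t) * X s) _ τ := h1.mul (hX τ)
  convert h2 using 1
  rw [star_smul, star_mul, star_Ham hH1 hH2]
  simp only [Complex.star_def, map_neg, Complex.conj_I, neg_neg]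
  simp only [mul_add, mul_smul_comm, smul_mul_assoc, mul_assoc]
  module

lemma starU_mul_eq (hH1 : H1.IsHermitian) (hH2 : H2.IsHermitian)
    (hU : IsEvolution H1 H2 f1 f2 U) (t : ℝ) {X : ℝ → Mat n}
    (hX : ∀ τ, HasDerivAt X ((-Complex.I) • (Ham H1 H2 f1 f2 τ * X τ)) τ) (τ : ℝ) :
    star (U τ t) * X τ = X t := by
  have hX' : ∀ τ, HasDerivAt X ((-Complex.I) • (Ham H1 H2 f1 f2 τ * X τ) + (0 : Mat n)) τ := by
    simpa using hX
  have hG := hasDerivAt_starU_mul hH1 hH2 hU t hX'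
  have hd : Differentiable ℝ (fun s => star (U s t) * X s) :=
    fun τ => ((hG τ).differentiableAt)
  have hz : ∀ τ : ℝ, deriv (fun s => star (U s t) * X s) τ = 0 := fun τ => by
    have := (hG τ).deriv
    simpa using this
  have := is_const_of_deriv_eq_zero hd hz τ t
  rw [this, hU.1 t, star_one, one_mul]

lemma starU_mul_U (hH1 : H1.IsHermitian) (hH2 : H2.IsHermitian)
    (hU : IsEvolution H1 H2 f1 f2 U) (s τ : ℝ) : star (U τ s) * U τ s = 1 := by
  have := starU_mul_eq hH1 hH2 hU s (X := fun τ => U τ s) (hU.2 s) τ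
  rw [this, hU.1 s]

lemma U_mul_starU (hH1 : H1.IsHermitian) (hH2 : H2.IsHermitian)
    (hU : IsEvolution H1 H2 f1 f2 U) (s τ : ℝ) : U τ s * star (U τ s) = 1 :=
  mul_eq_one_comm.mp (starU_mul_U hH1 hH2 hU s τ)

lemma norm_U_le (hH1 : H1.IsHermitian) (hH2 : H2.IsHermitian)
    (hU : IsEvolution H1 H2 f1 f2 U) (s τ : ℝ) : ‖U τ s‖ ≤ 1 :=
  TrotterAux.norm_le_one_of_star_mul_self (starU_mul_U hH1 hH2 hU s τ)

lemma U_semigroup (hH1 : H1.IsHermitian) (hH2 : H2.IsHermitian)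
    (hU : IsEvolution H1 H2 f1 f2 U) (c b a : ℝ) : U c b * U b a = U c a := by
  have h := starU_mul_eq hH1 hH2 hU b (X := fun τ => U τ a) (hU.2 a) c
  calc U c b * U b a = U c b * (star (U c b) * U c a) := by rw [h]
    _ = U c a := by rw [← mul_assoc, U_mul_starU hH1 hH2 hU b c, one_mul]

lemma local_error (hH1 : H1.IsHermitian) (hH2 : H2.IsHermitian)
    (hU : IsEvolution H1 H2 f1 f2 U) (t b : ℝ) (htb : t ≤ b) {W R : ℝ → Mat n} {g : ℝ → ℝ}
    (hW : ∀ τ, HasDerivAt W ((-Complex.I) • (Ham H1 H2 f1 f2 τ * W τ) + R τ) τ)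
    (hWt : W t = 1) (hR : Continuous R) (hg : Continuous g)
    (hbound : ∀ s ∈ Set.Icc t b, ‖R s‖ ≤ g s) :
    ‖W b - U b t‖ ≤ ∫ s in t..b, g s := by
  set G := fun s => star (U s t) * W s with hGdef
  have hG : ∀ τ, HasDerivAt G (star (U τ t) * R τ) τ :=
    hasDerivAt_starU_mul hH1 hH2 hU t hW
  have hcontU : Continuous (fun s => star (U s t)) := by
    rw [continuous_iff_continuousAt]
    exact fun τ => ((hU.2 t τ).star).continuousAt
  have hint : IntervalIntegrable (fun s => star (U s t) * R s) volume t b :=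
    (hcontU.mul hR).intervalIntegrable _ _
  have hFTC : ∫ s in t..b, star (U s t) * R s = G b - G t :=
    intervalIntegral.integral_eq_sub_of_hasDerivAt (fun τ _ => hG τ) hint
  have hGt : G t = 1 := by simp [hGdef, hU.1 t, hWt]
  have key : W b - U b t = U b t * (G b - 1) := by
    rw [mul_sub, mul_one, hGdef, ← mul_assoc, U_mul_starU hH1 hH2 hU t b, one_mul]
  rw [key]
  have hnormS : ∀ s, ‖star (U s t)‖ ≤ 1 := fun s => by
    rw [norm_star]; exact norm_U_le hH1 hH2 hU t s
  calc ‖U b t * (G b - 1)‖ ≤ ‖U b t‖ * ‖G b - 1‖ := norm_mul_le _ _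
    _ ≤ 1 * ‖G b - 1‖ := by
        apply mul_le_mul_of_nonneg_right (norm_U_le hH1 hH2 hU t b) (norm_nonneg _)
    _ = ‖∫ s in t..b, star (U s t) * R s‖ := by rw [one_mul, hFTC, hGt]
    _ ≤ ∫ s in t..b, ‖star (U s t) * R s‖ :=
        intervalIntegral.norm_integral_le_integral_norm htb
    _ ≤ ∫ s in t..b, g s := by
        apply intervalIntegral.integral_mono_on htb
          ((hcontU.mul hR).norm.intervalIntegrable _ _) (hg.intervalIntegrable _ _)
        intro s hs
        calc ‖star (U s t) * R s‖ ≤ ‖star (U s t)‖ * ‖R s‖ := norm_mul_le _ _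
          _ ≤ 1 * ‖R s‖ := mul_le_mul_of_nonneg_right (hnormS s) (norm_nonneg _)
          _ ≤ g s := by rw [one_mul]; exact hbound s hs

end Evo

section CommExp
open TrotterAux
variable {n : ℕ}

lemma commute_H_mexp (H : Mat n) (z : ℂ) : H * mexp (z • H) = mexp (z • H) * H := by
  have h : Commute H (z • H) := (Commute.refl H).smul_right z
  exact (h.exp_right)

lemma comm_mexp_bound_s7 (c : ℝ) {H : Mat n} (hH : H.IsHermitian) (A : Mat n) :
    ‖mexp ((-Complex.I * (c : ℂ)) • H) * A - A * mexp ((-Complex.I * (c : ℂ)) • H)‖ ≤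
      |c| * ‖H * A - A * H‖ := by
  set E : ℝ → Mat n := fun σ => mexp ((-Complex.I * ((σ * c : ℝ) : ℂ)) • H) with hEdef
  set E2 : ℝ → Mat n := fun σ => mexp ((-Complex.I * (((1 - σ) * c : ℝ) : ℂ)) • H) with hE2def
  have hE : ∀ σ : ℝ, HasDerivAt E ((-Complex.I * (c : ℂ)) • (H * E σ)) σ := by
    intro σ
    have hφ : HasDerivAt (fun σ : ℝ => -Complex.I * ((σ * c : ℝ) : ℂ)) (-Complex.I * (c : ℂ)) σ :=
      ((hasDerivAt_mul_const c).ofReal_comp).const_mul (-Complex.I)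
    exact hasDerivAt_mexp H hφ
  have hE2 : ∀ σ : ℝ, HasDerivAt E2 ((-Complex.I * ((-c : ℝ) : ℂ)) • (H * E2 σ)) σ := by
    intro σ
    have hr : HasDerivAt (fun σ : ℝ => (1 - σ) * c) (-c) σ := by
      have := ((hasDerivAt_const σ (1:ℝ)).sub (hasDerivAt_id σ)).mul_const c
      simpa using this
    have hφ : HasDerivAt (fun σ : ℝ => -Complex.I * (((1 - σ) * c : ℝ) : ℂ))
        (-Complex.I * ((-c : ℝ) : ℂ)) σ := (hr.ofReal_comp).const_mul (-Complex.I)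
    exact hasDerivAt_mexp H hφ
  set D : Mat n := H * A - A * H with hDdef
  set g : ℝ → Mat n := fun σ => E σ * (A * E2 σ) with hgdef
  have hg : ∀ σ : ℝ, HasDerivAt g ((-Complex.I * (c : ℂ)) • (E σ * (D * E2 σ))) σ := by
    intro σ
    have h : HasDerivAt g _ σ := (hE σ).mul ((hasDerivAt_const σ A).mul (hE2 σ))
    have hcomm : H * E σ = E σ * H := commute_H_mexp H _
    have hcast : ((-c : ℝ) : ℂ) = -(c : ℂ) := by push_cast; ring
    rw [hcast] at h
    have hm : E σ * (D * E2 σ)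
        = H * E σ * (A * E2 σ) - E σ * (A * (H * E2 σ)) := by
      rw [hDdef, sub_mul, mul_sub, mul_assoc H A (E2 σ), mul_assoc A H (E2 σ),
        ← mul_assoc (E σ) H (A * E2 σ), ← hcomm, mul_assoc]
    convert h using 1
    rw [hm]
    simp only [zero_mul, zero_add, mul_smul_comm, smul_mul_assoc, mul_neg, neg_neg,
      smul_sub, neg_smul]
    module
  have hcontE : Continuous E := by
    rw [continuous_iff_continuousAt]; exact fun σ => (hE σ).continuousAt
  have hcontE2 : Continuous E2 := by
    rw [continuous_iff_continuousAt]; exact fun σ => (hE2 σ).continuousAt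
  have hcontg' : Continuous (fun σ => (-Complex.I * (c : ℂ)) • (E σ * (D * E2 σ))) :=
    by fun_prop
  have hFTC : ∫ σ in (0:ℝ)..1, (-Complex.I * (c : ℂ)) • (E σ * (D * E2 σ)) = g 1 - g 0 :=
    intervalIntegral.integral_eq_sub_of_hasDerivAt (fun σ _ => hg σ)
      (hcontg'.intervalIntegrable _ _)
  have hg1 : g 1 = mexp ((-Complex.I * (c : ℂ)) • H) * A := by
    simp only [hgdef, hEdef, hE2def]
    norm_num
    simp [mexp, NormedSpace.exp_zero]
  have hg0 : g 0 = A * mexp ((-Complex.I * (c : ℂ)) • H) := by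
    simp only [hgdef, hEdef, hE2def]
    norm_num
    simp [mexp, NormedSpace.exp_zero]
  have hbound : ∀ σ ∈ Set.uIoc (0:ℝ) 1,
      ‖(-Complex.I * (c : ℂ)) • (E σ * (D * E2 σ))‖ ≤ |c| * ‖D‖ := by
    intro σ _
    rw [norm_smul]
    have h1 : ‖(-Complex.I * (c : ℂ))‖ = |c| := by
      simp [norm_mul, Complex.norm_real]
    rw [h1]
    apply mul_le_mul_of_nonneg_left _ (abs_nonneg c)
    calc ‖E σ * (D * E2 σ)‖ ≤ ‖E σ‖ * (‖D‖ * ‖E2 σ‖) :=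
          le_trans (norm_mul_le _ _) (by
            exact mul_le_mul_of_nonneg_left (norm_mul_le _ _) (norm_nonneg _))
      _ ≤ 1 * (‖D‖ * 1) := by
          apply mul_le_mul (norm_mexp_skew _ hH)
          · exact mul_le_mul_of_nonneg_left (norm_mexp_skew _ hH) (norm_nonneg _)
          · positivity
          · norm_num
      _ = ‖D‖ := by ring
  calc ‖mexp ((-Complex.I * (c : ℂ)) • H) * A - A * mexp ((-Complex.I * (c : ℂ)) • H)‖
      = ‖∫ σ in (0:ℝ)..1, (-Complex.I * (c : ℂ)) • (E σ * (D * E2 σ))‖ := by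
        rw [hFTC, hg1, hg0]
    _ ≤ (|c| * ‖D‖) * |1 - 0| := intervalIntegral.norm_integral_le_of_norm_le_const hbound
    _ = |c| * ‖H * A - A * H‖ := by rw [hDdef]; norm_num

end CommExp

section Integrals
open intervalIntegral

lemma int_lin (t b : ℝ) : (∫ s in t..b, (s - t)) = (b - t)^2/2 := by
  rw [intervalIntegral.integral_sub (continuous_id'.intervalIntegrable _ _)
    (continuous_const.intervalIntegrable _ _)]
  simp [integral_id, smul_eq_mul]
  ring

lemma int_lin' (t b : ℝ) : (∫ s in t..b, (b - s)) = (b - t)^2/2 := by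
  rw [intervalIntegral.integral_sub (continuous_const.intervalIntegrable _ _)
    (continuous_id'.intervalIntegrable _ _)]
  simp [integral_id, smul_eq_mul]
  ring

lemma int_quad (t b : ℝ) : (∫ s in t..b, (s - t)*(b - s)) = (b - t)^3/6 := by
  have h : (fun s : ℝ => (s - t) * (b - s)) = fun s => -(s^2) + (b+t)*s - t*b := by
    funext s; ring
  rw [h]
  have i3 : IntervalIntegrable (fun s : ℝ => -(s^2)) volume t b :=
    ((continuous_pow 2).neg).intervalIntegrable _ _
  have i4 : IntervalIntegrable (fun s : ℝ => (b+t)*s) volume t b :=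
    (continuous_const.mul continuous_id').intervalIntegrable _ _
  rw [intervalIntegral.integral_sub (i3.add i4) (continuous_const.intervalIntegrable _ _),
      intervalIntegral.integral_add i3 i4,
      intervalIntegral.integral_neg, integral_pow, intervalIntegral.integral_const_mul,
      integral_id, intervalIntegral.integral_const, smul_eq_mul]
  push_cast
  ring

end Integrals

section Local
open TrotterAux
variable {n : ℕ} {H1 H2 : Mat n} {f1 f2 : ℝ → ℝ} {U : ℝ → ℝ → Mat n}

lemma mvt_bound {f : ℝ → ℝ} (hf : ContDiff ℝ 1 f) {F' T : ℝ}
    (hb : ∀ x ∈ Set.Icc (0:ℝ) T, |deriv f x| ≤ F') {x y : ℝ}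
    (hx : x ∈ Set.Icc (0:ℝ) T) (hy : y ∈ Set.Icc (0:ℝ) T) : |f y - f x| ≤ F' * |y - x| := by
  have h := (convex_Icc (0:ℝ) T).norm_image_sub_le_of_norm_deriv_le
    (fun z _ => (hf.differentiable one_ne_zero).differentiableAt)
    (fun z hz => by simpa using hb z hz) hx hy
  simpa [Real.norm_eq_abs] using h

lemma Ug1_local (hH1 : H1.IsHermitian) (hH2 : H2.IsHermitian)
    (hf1 : ContDiff ℝ 1 f1) (hf2 : ContDiff ℝ 1 f2)
    (hU : IsEvolution H1 H2 f1 f2 U) {T F1 F2 : ℝ}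
    (hF1 : 0 ≤ F1) (hF2 : 0 ≤ F2)
    (hb1 : ∀ t ∈ Set.Icc (0:ℝ) T, |f1 t| ≤ F1)
    (hb2 : ∀ t ∈ Set.Icc (0:ℝ) T, |f2 t| ≤ F2)
    {t b : ℝ} (ht : 0 ≤ t) (htb : t ≤ b) (hbT : b ≤ T) :
    ‖Ug1 H1 H2 f1 f2 b t - U b t‖ ≤ F1 * F2 * ‖matComm H1 H2‖ * (b - t)^2/2 := by
  set A1 : ℝ → ℝ := fun τ => ∫ s in t..τ, f1 s with hA1def
  set A2 : ℝ → ℝ := fun τ => ∫ s in t..τ, f2 s with hA2def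
  have hA1 : ∀ τ : ℝ, HasDerivAt A1 (f1 τ) τ := fun τ =>
    intervalIntegral.integral_hasDerivAt_right
      ((hf1.continuous).intervalIntegrable _ _)
      ((hf1.continuous).stronglyMeasurableAtFilter _ _)
      (hf1.continuous.continuousAt)
  have hA2 : ∀ τ : ℝ, HasDerivAt A2 (f2 τ) τ := fun τ =>
    intervalIntegral.integral_hasDerivAt_right
      ((hf2.continuous).intervalIntegrable _ _)
      ((hf2.continuous).stronglyMeasurableAtFilter _ _)
      (hf2.continuous.continuousAt)
  set E1 : ℝ → Mat n := fun τ => mexp ((-Complex.I * ((A1 τ : ℝ) : ℂ)) • H1) with hE1def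
  set E2 : ℝ → Mat n := fun τ => mexp ((-Complex.I * ((A2 τ : ℝ) : ℂ)) • H2) with hE2def
  set W : ℝ → Mat n := fun τ => E2 τ * E1 τ with hWdef
  set R : ℝ → Mat n := fun τ =>
    (-Complex.I * ((f1 τ : ℝ) : ℂ)) • ((E2 τ * H1 - H1 * E2 τ) * E1 τ) with hRdef
  have hE1d : ∀ τ : ℝ, HasDerivAt E1 ((-Complex.I * ((f1 τ : ℝ) : ℂ)) • (H1 * E1 τ)) τ :=
    fun τ => hasDerivAt_mexp H1 (((hA1 τ).ofReal_comp).const_mul (-Complex.I))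
  have hE2d : ∀ τ : ℝ, HasDerivAt E2 ((-Complex.I * ((f2 τ : ℝ) : ℂ)) • (H2 * E2 τ)) τ :=
    fun τ => hasDerivAt_mexp H2 (((hA2 τ).ofReal_comp).const_mul (-Complex.I))
  have hW : ∀ τ : ℝ, HasDerivAt W
      ((-Complex.I) • (Ham H1 H2 f1 f2 τ * W τ) + R τ) τ := by
    intro τ
    have h : HasDerivAt W _ τ := (hE2d τ).mul (hE1d τ)
    convert h using 1
    simp only [hRdef, Ham, hWdef, add_mul, sub_mul, smul_mul_assoc, mul_smul_comm,
      smul_sub, smul_add, smul_smul, mul_assoc]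
    module
  have hWt : W t = 1 := by
    simp only [hWdef, hE1def, hE2def, hA1def, hA2def]
    norm_num
    simp [mexp, NormedSpace.exp_zero]
  have hcontE1 : Continuous E1 := by
    rw [continuous_iff_continuousAt]; exact fun τ => (hE1d τ).continuousAt
  have hcontE2 : Continuous E2 := by
    rw [continuous_iff_continuousAt]; exact fun τ => (hE2d τ).continuousAt
  have hR : Continuous R := by
    have := hf1.continuous
    rw [hRdef]; fun_prop
  set g : ℝ → ℝ := fun s => F1 * F2 * ‖matComm H1 H2‖ * (s - t) with hgdef
  have hbound : ∀ s ∈ Set.Icc t b, ‖R s‖ ≤ g s := by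
    intro s hs
    have hsT : s ∈ Set.Icc (0:ℝ) T := ⟨le_trans ht hs.1, le_trans hs.2 hbT⟩
    have h1 : ‖R s‖ ≤ |f1 s| * ‖(E2 s * H1 - H1 * E2 s) * E1 s‖ := by
      rw [hRdef, norm_smul]
      apply mul_le_mul_of_nonneg_right _ (norm_nonneg _)
      simp [norm_mul, Complex.norm_real]
    have h2 : ‖(E2 s * H1 - H1 * E2 s) * E1 s‖ ≤ ‖E2 s * H1 - H1 * E2 s‖ := by
      calc ‖(E2 s * H1 - H1 * E2 s) * E1 s‖ ≤ ‖E2 s * H1 - H1 * E2 s‖ * ‖E1 s‖ :=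
            norm_mul_le _ _
        _ ≤ ‖E2 s * H1 - H1 * E2 s‖ * 1 :=
            mul_le_mul_of_nonneg_left (norm_mexp_skew _ hH1) (norm_nonneg _)
        _ = _ := mul_one _
    have h3 : ‖E2 s * H1 - H1 * E2 s‖ ≤ |A2 s| * ‖matComm H1 H2‖ := by
      have := comm_mexp_bound_s7 (A2 s) hH2 H1
      calc ‖E2 s * H1 - H1 * E2 s‖ ≤ |A2 s| * ‖H2 * H1 - H1 * H2‖ := this
        _ = |A2 s| * ‖matComm H1 H2‖ := by
            rw [show H2 * H1 - H1 * H2 = -(matComm H1 H2) from by rw [matComm, neg_sub],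
              norm_neg]
    have h4 : |A2 s| ≤ F2 * (s - t) := by
      have := intervalIntegral.norm_integral_le_of_norm_le_const (C := F2)
        (f := f2) (a := t) (b := s) ?_
      · rw [Real.norm_eq_abs] at this
        calc |A2 s| ≤ F2 * |s - t| := this
          _ = F2 * (s - t) := by rw [abs_of_nonneg (by linarith [hs.1])]
      · intro x hx
        rw [Set.uIoc_of_le hs.1] at hx
        exact (Real.norm_eq_abs _) ▸ hb2 x ⟨le_trans ht (le_of_lt hx.1),
          le_trans hx.2 (le_trans hs.2 hbT)⟩
    calc ‖R s‖ ≤ |f1 s| * ‖(E2 s * H1 - H1 * E2 s) * E1 s‖ := h1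
      _ ≤ F1 * (|A2 s| * ‖matComm H1 H2‖) := by
          apply mul_le_mul (hb1 s hsT) (le_trans h2 h3) (norm_nonneg _) hF1
      _ ≤ F1 * ((F2 * (s - t)) * ‖matComm H1 H2‖) := by
          apply mul_le_mul_of_nonneg_left _ hF1
          exact mul_le_mul_of_nonneg_right h4 (norm_nonneg _)
      _ = g s := by rw [hgdef]; ring
  have hloc := local_error hH1 hH2 hU t b htb hW hWt hR (by fun_prop) hbound
  have hWb : W b = Ug1 H1 H2 f1 f2 b t := rfl
  rw [hWb] at hloc
  calc ‖Ug1 H1 H2 f1 f2 b t - U b t‖ ≤ ∫ s in t..b, g s := hloc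
    _ = F1 * F2 * ‖matComm H1 H2‖ * (b - t)^2/2 := by
        rw [hgdef]
        rw [intervalIntegral.integral_const_mul, int_lin]
        ring

end Local

section LocalS
open TrotterAux
variable {n : ℕ} {H1 H2 : Mat n} {f1 f2 : ℝ → ℝ} {U : ℝ → ℝ → Mat n}

lemma Us1_local (hH1 : H1.IsHermitian) (hH2 : H2.IsHermitian)
    (hf1 : ContDiff ℝ 1 f1) (hf2 : ContDiff ℝ 1 f2)
    (hU : IsEvolution H1 H2 f1 f2 U) {T F1 F2 F1' F2' : ℝ}
    (hF1 : 0 ≤ F1) (hF2 : 0 ≤ F2) (hF1' : 0 ≤ F1') (hF2' : 0 ≤ F2')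
    (hb1 : ∀ t ∈ Set.Icc (0:ℝ) T, |f1 t| ≤ F1)
    (hb2 : ∀ t ∈ Set.Icc (0:ℝ) T, |f2 t| ≤ F2)
    (hb1' : ∀ t ∈ Set.Icc (0:ℝ) T, |deriv f1 t| ≤ F1')
    (hb2' : ∀ t ∈ Set.Icc (0:ℝ) T, |deriv f2 t| ≤ F2')
    {t b : ℝ} (ht : 0 ≤ t) (htb : t ≤ b) (hbT : b ≤ T) :
    ‖Us1 H1 H2 f1 f2 b t - U b t‖ ≤
      ((1/2) * F1' * ‖H1‖ + (1/2) * F2' * ‖H2‖ + (1/2) * F1 * F2 * ‖matComm H1 H2‖)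
        * (b - t)^2 + (1/6) * F1 * F2' * ‖matComm H1 H2‖ * (b - t)^3 := by
  set E1 : ℝ → Mat n := fun τ => mexp ((-Complex.I * (((τ - t) * f1 b : ℝ) : ℂ)) • H1)
    with hE1def
  set E2 : ℝ → Mat n := fun τ => mexp ((-Complex.I * (((τ - t) * f2 b : ℝ) : ℂ)) • H2)
    with hE2def
  set W : ℝ → Mat n := fun τ => E2 τ * E1 τ with hWdef
  set Hb : Mat n := (f1 b : ℂ) • H1 + (f2 b : ℂ) • H2 with hHbdef
  set R : ℝ → Mat n := fun τ =>
    (-Complex.I) • ((Hb - Ham H1 H2 f1 f2 τ) * W τ) +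
      (-Complex.I * ((f1 b : ℝ) : ℂ)) • ((E2 τ * H1 - H1 * E2 τ) * E1 τ) with hRdef
  have hd1 : ∀ τ : ℝ, HasDerivAt (fun τ : ℝ => (τ - t) * f1 b) (f1 b) τ := fun τ => by
    simpa using ((hasDerivAt_id τ).sub_const t).mul_const (f1 b)
  have hd2 : ∀ τ : ℝ, HasDerivAt (fun τ : ℝ => (τ - t) * f2 b) (f2 b) τ := fun τ => by
    simpa using ((hasDerivAt_id τ).sub_const t).mul_const (f2 b)
  have hE1d : ∀ τ : ℝ, HasDerivAt E1 ((-Complex.I * ((f1 b : ℝ) : ℂ)) • (H1 * E1 τ)) τ :=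
    fun τ => hasDerivAt_mexp H1 (((hd1 τ).ofReal_comp).const_mul (-Complex.I))
  have hE2d : ∀ τ : ℝ, HasDerivAt E2 ((-Complex.I * ((f2 b : ℝ) : ℂ)) • (H2 * E2 τ)) τ :=
    fun τ => hasDerivAt_mexp H2 (((hd2 τ).ofReal_comp).const_mul (-Complex.I))
  have hW : ∀ τ : ℝ, HasDerivAt W
      ((-Complex.I) • (Ham H1 H2 f1 f2 τ * W τ) + R τ) τ := by
    intro τ
    have h : HasDerivAt W _ τ := (hE2d τ).mul (hE1d τ)
    convert h using 1
    simp only [hRdef, hHbdef, Ham, hWdef, add_mul, sub_mul, smul_mul_assoc, mul_smul_comm,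
      smul_sub, smul_add, smul_smul, mul_assoc]
    module
  have hWt : W t = 1 := by
    simp only [hWdef, hE1def, hE2def]
    norm_num
    simp [mexp, NormedSpace.exp_zero]
  have hcontE1 : Continuous E1 := by
    rw [continuous_iff_continuousAt]; exact fun τ => (hE1d τ).continuousAt
  have hcontE2 : Continuous E2 := by
    rw [continuous_iff_continuousAt]; exact fun τ => (hE2d τ).continuousAt
  have hcontHam : Continuous (fun τ => Ham H1 H2 f1 f2 τ) := by
    apply Continuous.add
    · exact (Complex.continuous_ofReal.comp hf1.continuous).smul continuous_const
    · exact (Complex.continuous_ofReal.comp hf2.continuous).smul continuous_const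
  have hR : Continuous R := by
    rw [hRdef, hWdef]; fun_prop
  set C : ℝ := ‖matComm H1 H2‖ with hCdef
  set g : ℝ → ℝ := fun s => (F1' * ‖H1‖ + F2' * ‖H2‖) * (b - s) + F1 * F2 * C * (s - t)
      + F1 * F2' * C * ((s - t) * (b - s)) with hgdef
  have hbound : ∀ s ∈ Set.Icc t b, ‖R s‖ ≤ g s := by
    intro s hs
    have hsT : s ∈ Set.Icc (0:ℝ) T := ⟨le_trans ht hs.1, le_trans hs.2 hbT⟩
    have hbT' : b ∈ Set.Icc (0:ℝ) T := ⟨le_trans ht htb, hbT⟩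
    have hst : 0 ≤ s - t := by linarith [hs.1]
    have hbs : 0 ≤ b - s := by linarith [hs.2]
    -- norms of exponentials
    have hnE1 : ‖E1 s‖ ≤ 1 := norm_mexp_skew _ hH1
    have hnE2 : ‖E2 s‖ ≤ 1 := norm_mexp_skew _ hH2
    have hnW : ‖W s‖ ≤ 1 := by
      calc ‖E2 s * E1 s‖ ≤ ‖E2 s‖ * ‖E1 s‖ := norm_mul_le _ _
        _ ≤ 1 * 1 := mul_le_mul hnE2 hnE1 (norm_nonneg _) zero_le_one
        _ = 1 := one_mul 1
    -- first term
    have hmvt1 : |f1 b - f1 s| ≤ F1' * (b - s) := by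
      have := mvt_bound hf1 hb1' hsT hbT'
      rwa [abs_of_nonneg hbs] at this
    have hmvt2 : |f2 b - f2 s| ≤ F2' * (b - s) := by
      have := mvt_bound hf2 hb2' hsT hbT'
      rwa [abs_of_nonneg hbs] at this
    have hHdiff : ‖Hb - Ham H1 H2 f1 f2 s‖ ≤ (F1' * ‖H1‖ + F2' * ‖H2‖) * (b - s) := by
      have heq : Hb - Ham H1 H2 f1 f2 s =
          ((f1 b - f1 s : ℝ) : ℂ) • H1 + ((f2 b - f2 s : ℝ) : ℂ) • H2 := by
        rw [hHbdef, Ham]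
        push_cast
        module
      rw [heq]
      calc ‖((f1 b - f1 s : ℝ) : ℂ) • H1 + ((f2 b - f2 s : ℝ) : ℂ) • H2‖
          ≤ ‖((f1 b - f1 s : ℝ) : ℂ) • H1‖ + ‖((f2 b - f2 s : ℝ) : ℂ) • H2‖ := norm_add_le _ _
        _ = |f1 b - f1 s| * ‖H1‖ + |f2 b - f2 s| * ‖H2‖ := by
            rw [norm_smul, norm_smul]
            simp [← Complex.ofReal_sub, Complex.norm_real]
        _ ≤ (F1' * (b - s)) * ‖H1‖ + (F2' * (b - s)) * ‖H2‖ := by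
            apply add_le_add
            · exact mul_le_mul_of_nonneg_right hmvt1 (norm_nonneg _)
            · exact mul_le_mul_of_nonneg_right hmvt2 (norm_nonneg _)
        _ = (F1' * ‖H1‖ + F2' * ‖H2‖) * (b - s) := by ring
    have hterm1 : ‖(-Complex.I) • ((Hb - Ham H1 H2 f1 f2 s) * W s)‖ ≤
        (F1' * ‖H1‖ + F2' * ‖H2‖) * (b - s) := by
      rw [norm_smul]
      have : ‖(-Complex.I)‖ = 1 := by simp
      rw [this, one_mul]
      calc ‖(Hb - Ham H1 H2 f1 f2 s) * W s‖ ≤ ‖Hb - Ham H1 H2 f1 f2 s‖ * ‖W s‖ :=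
            norm_mul_le _ _
        _ ≤ ‖Hb - Ham H1 H2 f1 f2 s‖ * 1 :=
            mul_le_mul_of_nonneg_left hnW (norm_nonneg _)
        _ ≤ (F1' * ‖H1‖ + F2' * ‖H2‖) * (b - s) := by rw [mul_one]; exact hHdiff
    -- second term
    have hcomm : ‖E2 s * H1 - H1 * E2 s‖ ≤ |(s - t) * f2 b| * C := by
      have := comm_mexp_bound_s7 ((s - t) * f2 b) hH2 H1
      calc ‖E2 s * H1 - H1 * E2 s‖ ≤ |(s - t) * f2 b| * ‖H2 * H1 - H1 * H2‖ := this
        _ = |(s - t) * f2 b| * C := by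
            rw [hCdef, show H2 * H1 - H1 * H2 = -(matComm H1 H2) from by
              rw [matComm, neg_sub], norm_neg]
    have hf2b : |f2 b| ≤ F2 + F2' * (b - s) := by
      calc |f2 b| ≤ |f2 s| + |f2 b - f2 s| := by
            have := abs_add_le (f2 s) (f2 b - f2 s); simpa using this
        _ ≤ F2 + F2' * (b - s) := add_le_add (hb2 s hsT) hmvt2
    have habs : |(s - t) * f2 b| ≤ (s - t) * (F2 + F2' * (b - s)) := by
      rw [abs_mul, abs_of_nonneg hst]
      exact mul_le_mul_of_nonneg_left hf2b hst
    have hterm2 : ‖(-Complex.I * ((f1 b : ℝ) : ℂ)) • ((E2 s * H1 - H1 * E2 s) * E1 s)‖ ≤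
        F1 * ((s - t) * (F2 + F2' * (b - s)) * C) := by
      rw [norm_smul]
      have h1 : ‖(-Complex.I * ((f1 b : ℝ) : ℂ))‖ = |f1 b| := by
        simp [norm_mul, Complex.norm_real]
      rw [h1]
      have h2 : ‖(E2 s * H1 - H1 * E2 s) * E1 s‖ ≤ (s - t) * (F2 + F2' * (b - s)) * C := by
        calc ‖(E2 s * H1 - H1 * E2 s) * E1 s‖ ≤ ‖E2 s * H1 - H1 * E2 s‖ * ‖E1 s‖ :=
              norm_mul_le _ _
          _ ≤ (|(s - t) * f2 b| * C) * 1 := by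
              apply mul_le_mul hcomm hnE1 (norm_nonneg _)
              positivity
          _ ≤ (s - t) * (F2 + F2' * (b - s)) * C := by
              rw [mul_one]
              exact mul_le_mul_of_nonneg_right habs (norm_nonneg _)
      apply mul_le_mul (hb1 b hbT') h2 (norm_nonneg _) hF1
    calc ‖R s‖ ≤ ‖(-Complex.I) • ((Hb - Ham H1 H2 f1 f2 s) * W s)‖ +
          ‖(-Complex.I * ((f1 b : ℝ) : ℂ)) • ((E2 s * H1 - H1 * E2 s) * E1 s)‖ := by
            rw [hRdef]; exact norm_add_le _ _
      _ ≤ (F1' * ‖H1‖ + F2' * ‖H2‖) * (b - s) +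
          F1 * ((s - t) * (F2 + F2' * (b - s)) * C) := add_le_add hterm1 hterm2
      _ = g s := by rw [hgdef]; ring
  have hloc := local_error hH1 hH2 hU t b htb hW hWt hR (by fun_prop) hbound
  have hWb : W b = Us1 H1 H2 f1 f2 b t := rfl
  rw [hWb] at hloc
  have hint : (∫ s in t..b, g s) =
      ((1/2) * F1' * ‖H1‖ + (1/2) * F2' * ‖H2‖ + (1/2) * F1 * F2 * C) * (b - t)^2
        + (1/6) * F1 * F2' * C * (b - t)^3 := by
    have i1 : IntervalIntegrable (fun s => (F1' * ‖H1‖ + F2' * ‖H2‖) * (b - s)) volume t b :=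
      (continuous_const.mul (continuous_const.sub continuous_id')).intervalIntegrable _ _
    have i2 : IntervalIntegrable (fun s => F1 * F2 * C * (s - t)) volume t b :=
      (continuous_const.mul (continuous_id'.sub continuous_const)).intervalIntegrable _ _
    have i3 : IntervalIntegrable (fun s => F1 * F2' * C * ((s - t) * (b - s))) volume t b :=
      (continuous_const.mul ((continuous_id'.sub continuous_const).mul
        (continuous_const.sub continuous_id'))).intervalIntegrable _ _
    rw [hgdef]
    rw [intervalIntegral.integral_add (i1.add i2) i3, intervalIntegral.integral_add i1 i2,
      intervalIntegral.integral_const_mul, intervalIntegral.integral_const_mul,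
      intervalIntegral.integral_const_mul, int_lin, int_lin', int_quad]
    ring
  rw [hCdef] at hint
  calc ‖Us1 H1 H2 f1 f2 b t - U b t‖ ≤ ∫ s in t..b, g s := hloc
    _ = _ := hint

end LocalS

section Glue
open TrotterAux
variable {n : ℕ} {H1 H2 : Mat n} {f1 f2 : ℝ → ℝ} {U : ℝ → ℝ → Mat n}

lemma norm_prodSteps_le (f : ℕ → Mat n) (hf : ∀ l, ‖f l‖ ≤ 1) :
    ∀ L : ℕ, ‖prodSteps f L‖ ≤ 1
  | 0 => norm_one_le
  | (k+1) => by
    calc ‖prodSteps f (k+1)‖ = ‖f k * prodSteps f k‖ := rfl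
      _ ≤ ‖f k‖ * ‖prodSteps f k‖ := norm_mul_le _ _
      _ ≤ 1 * 1 := mul_le_mul (hf k) (norm_prodSteps_le f hf k) (norm_nonneg _) zero_le_one
      _ = 1 := one_mul 1

lemma prod_diff_le (S V : ℕ → Mat n) (hS : ∀ l, ‖S l‖ ≤ 1) (hV : ∀ l, ‖V l‖ ≤ 1) :
    ∀ L : ℕ, ‖prodSteps S L - prodSteps V L‖ ≤ ∑ l ∈ Finset.range L, ‖S l - V l‖
  | 0 => by simp [prodSteps]
  | (k+1) => by
    have key : prodSteps S (k+1) - prodSteps V (k+1)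
        = S k * (prodSteps S k - prodSteps V k) + (S k - V k) * prodSteps V k := by
      show S k * prodSteps S k - V k * prodSteps V k = _
      noncomm_ring
    rw [key, Finset.sum_range_succ]
    calc ‖S k * (prodSteps S k - prodSteps V k) + (S k - V k) * prodSteps V k‖
        ≤ ‖S k * (prodSteps S k - prodSteps V k)‖ + ‖(S k - V k) * prodSteps V k‖ :=
          norm_add_le _ _
      _ ≤ ‖S k‖ * ‖prodSteps S k - prodSteps V k‖ + ‖S k - V k‖ * ‖prodSteps V k‖ :=
          add_le_add (norm_mul_le _ _) (norm_mul_le _ _)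
      _ ≤ 1 * ‖prodSteps S k - prodSteps V k‖ + ‖S k - V k‖ * 1 := by
          apply add_le_add
          · exact mul_le_mul_of_nonneg_right (hS k) (norm_nonneg _)
          · exact mul_le_mul_of_nonneg_left (norm_prodSteps_le V hV k) (norm_nonneg _)
      _ ≤ (∑ l ∈ Finset.range k, ‖S l - V l‖) + ‖S k - V k‖ := by
          rw [one_mul, mul_one]
          exact add_le_add_left (prod_diff_le S V hS hV k) _

lemma prodSteps_exact (hH1 : H1.IsHermitian) (hH2 : H2.IsHermitian)
    (hU : IsEvolution H1 H2 f1 f2 U) (T : ℝ) (L : ℕ) :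
    ∀ k : ℕ, prodSteps
      (fun l => U ((((l : ℝ) + 1) * T) / (L : ℝ)) (((l : ℝ) * T) / (L : ℝ))) k
      = U (((k : ℝ) * T) / (L : ℝ)) 0
  | 0 => by
    show (1 : Mat n) = U (((0:ℕ) : ℝ) * T / (L : ℝ)) 0
    norm_num
    exact (hU.1 0).symm
  | (k+1) => by
    show U ((((k : ℝ) + 1) * T) / (L : ℝ)) (((k : ℝ) * T) / (L : ℝ)) * _ = _
    rw [prodSteps_exact hH1 hH2 hU T L k,
      U_semigroup hH1 hH2 hU ((((k : ℝ) + 1) * T) / (L : ℝ)) (((k : ℝ) * T) / (L : ℝ)) 0]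
    norm_num

lemma norm_Us1_le (hH1 : H1.IsHermitian) (hH2 : H2.IsHermitian) (b a : ℝ) :
    ‖Us1 H1 H2 f1 f2 b a‖ ≤ 1 := by
  calc ‖Us1 H1 H2 f1 f2 b a‖ ≤ ‖mexp ((-Complex.I * (((b - a) * f2 b : ℝ) : ℂ)) • H2)‖ *
        ‖mexp ((-Complex.I * (((b - a) * f1 b : ℝ) : ℂ)) • H1)‖ := norm_mul_le _ _
    _ ≤ 1 * 1 := mul_le_mul (norm_mexp_skew _ hH2) (norm_mexp_skew _ hH1)
        (norm_nonneg _) zero_le_one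
    _ = 1 := one_mul 1

lemma norm_Ug1_le (hH1 : H1.IsHermitian) (hH2 : H2.IsHermitian) (b a : ℝ) :
    ‖Ug1 H1 H2 f1 f2 b a‖ ≤ 1 := by
  calc ‖Ug1 H1 H2 f1 f2 b a‖ ≤ ‖mexp ((-Complex.I * ((∫ s in a..b, f2 s : ℝ) : ℂ)) • H2)‖ *
        ‖mexp ((-Complex.I * ((∫ s in a..b, f1 s : ℝ) : ℂ)) • H1)‖ := norm_mul_le _ _
    _ ≤ 1 * 1 := mul_le_mul (norm_mexp_skew _ hH2) (norm_mexp_skew _ hH1)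
        (norm_nonneg _) zero_le_one
    _ = 1 := one_mul 1

end Glue


/-- **Global operator norm error bounds for the first-order Trotter formulae.** -/
theorem global_opnorm_error_first_order_Trotter
    {n : ℕ} (hn : 0 < n) (H1 H2 : Mat n)
    (hH1 : H1.IsHermitian) (hH2 : H2.IsHermitian)
    (f1 f2 : ℝ → ℝ) (hf1 : ContDiff ℝ 1 f1) (hf2 : ContDiff ℝ 1 f2)
    (U : ℝ → ℝ → Mat n) (hU : IsEvolution H1 H2 f1 f2 U)
    (T : ℝ) (hT : 0 < T) (L : ℕ) (hL : 0 < L)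
    (F1 F2 F1' F2' : ℝ) (hF1 : 0 ≤ F1) (hF2 : 0 ≤ F2) (hF1' : 0 ≤ F1') (hF2' : 0 ≤ F2')
    (hb1 : ∀ t ∈ Set.Icc (0:ℝ) T, |f1 t| ≤ F1)
    (hb2 : ∀ t ∈ Set.Icc (0:ℝ) T, |f2 t| ≤ F2)
    (hb1' : ∀ t ∈ Set.Icc (0:ℝ) T, |deriv f1 t| ≤ F1')
    (hb2' : ∀ t ∈ Set.Icc (0:ℝ) T, |deriv f2 t| ≤ F2') :
    ‖trotterProd (Us1 H1 H2 f1 f2) T L - U T 0‖ ≤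
      ((1/2) * F1' * ‖H1‖ + (1/2) * F2' * ‖H2‖ + (1/2) * F1 * F2 * ‖matComm H1 H2‖)
          * T^2 / L
        + ((1/6) * F1 * F2' * ‖matComm H1 H2‖) * T^3 / L^2 ∧
    ‖trotterProd (Ug1 H1 H2 f1 f2) T L - U T 0‖ ≤
      (1/2) * F1 * F2 * ‖matComm H1 H2‖ * T^2 / L := by

  have hLR : (0:ℝ) < (L : ℝ) := by exact_mod_cast hL
  have hLne : (L : ℝ) ≠ 0 := ne_of_gt hLR
  set C : ℝ := ‖matComm H1 H2‖ with hCdef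
  have hC : 0 ≤ C := norm_nonneg _
  -- endpoints
  have hpt0 : ∀ l : ℕ, (0:ℝ) ≤ ((l : ℝ) * T) / (L : ℝ) := fun l => by positivity
  have hpt1 : ∀ l : ℕ, ((l : ℝ) * T) / (L : ℝ) ≤ (((l : ℝ) + 1) * T) / (L : ℝ) := fun l => by
    gcongr
    linarith
  have hpt2 : ∀ l : ℕ, l < L → (((l : ℝ) + 1) * T) / (L : ℝ) ≤ T := fun l hl => by
    rw [div_le_iff₀ hLR]
    have hl1 : ((l : ℝ) + 1) ≤ (L : ℝ) := by exact_mod_cast Nat.succ_le_of_lt hl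
    nlinarith
  have hdiff : ∀ l : ℕ, (((l : ℝ) + 1) * T) / (L : ℝ) - ((l : ℝ) * T) / (L : ℝ) = T / L := by
    intro l; field_simp; ring
  have hVnorm : ∀ l : ℕ,
      ‖U ((((l : ℝ) + 1) * T) / (L : ℝ)) (((l : ℝ) * T) / (L : ℝ))‖ ≤ 1 :=
    fun l => norm_U_le hH1 hH2 hU _ _
  have hexact : prodSteps
      (fun l => U ((((l : ℝ) + 1) * T) / (L : ℝ)) (((l : ℝ) * T) / (L : ℝ))) L = U T 0 := by
    rw [prodSteps_exact hH1 hH2 hU T L L]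
    congr 1
    field_simp
  constructor
  · -- standard Trotter
    set e : ℝ := ((1/2) * F1' * ‖H1‖ + (1/2) * F2' * ‖H2‖ + (1/2) * F1 * F2 * C) * (T/L)^2
        + (1/6) * F1 * F2' * C * (T/L)^3 with hedef
    have hloc : ∀ l : ℕ, l < L →
        ‖Us1 H1 H2 f1 f2 ((((l : ℝ) + 1) * T) / (L : ℝ)) (((l : ℝ) * T) / (L : ℝ)) -
          U ((((l : ℝ) + 1) * T) / (L : ℝ)) (((l : ℝ) * T) / (L : ℝ))‖ ≤ e := by
      intro l hl
      have h := Us1_local hH1 hH2 hf1 hf2 hU hF1 hF2 hF1' hF2' hb1 hb2 hb1' hb2'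
        (hpt0 l) (hpt1 l) (hpt2 l hl)
      rw [hdiff l] at h
      exact h
    have hmain : ‖trotterProd (Us1 H1 H2 f1 f2) T L - U T 0‖ ≤ (L : ℝ) * e := by
      rw [trotterProd, ← hexact]
      calc _ ≤ ∑ l ∈ Finset.range L,
            ‖Us1 H1 H2 f1 f2 ((((l : ℝ) + 1) * T) / (L : ℝ)) (((l : ℝ) * T) / (L : ℝ)) -
              U ((((l : ℝ) + 1) * T) / (L : ℝ)) (((l : ℝ) * T) / (L : ℝ))‖ :=
            prod_diff_le _ _ (fun l => norm_Us1_le hH1 hH2 _ _) hVnorm L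
        _ ≤ ∑ l ∈ Finset.range L, e :=
            Finset.sum_le_sum (fun l hl => hloc l (Finset.mem_range.mp hl))
        _ = (L : ℝ) * e := by
            rw [Finset.sum_const, Finset.card_range, nsmul_eq_mul]
    calc ‖trotterProd (Us1 H1 H2 f1 f2) T L - U T 0‖ ≤ (L : ℝ) * e := hmain
      _ = ((1/2) * F1' * ‖H1‖ + (1/2) * F2' * ‖H2‖ + (1/2) * F1 * F2 * C) * T^2 / L
          + ((1/6) * F1 * F2' * C) * T^3 / L^2 := by
          rw [hedef]
          field_simp
  · -- generalized Trotter
    set e : ℝ := F1 * F2 * C * (T/L)^2 / 2 with hedef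
    have hloc : ∀ l : ℕ, l < L →
        ‖Ug1 H1 H2 f1 f2 ((((l : ℝ) + 1) * T) / (L : ℝ)) (((l : ℝ) * T) / (L : ℝ)) -
          U ((((l : ℝ) + 1) * T) / (L : ℝ)) (((l : ℝ) * T) / (L : ℝ))‖ ≤ e := by
      intro l hl
      have h := Ug1_local hH1 hH2 hf1 hf2 hU hF1 hF2 hb1 hb2
        (hpt0 l) (hpt1 l) (hpt2 l hl)
      rw [hdiff l] at h
      exact h
    have hmain : ‖trotterProd (Ug1 H1 H2 f1 f2) T L - U T 0‖ ≤ (L : ℝ) * e := by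
      rw [trotterProd, ← hexact]
      calc _ ≤ ∑ l ∈ Finset.range L,
            ‖Ug1 H1 H2 f1 f2 ((((l : ℝ) + 1) * T) / (L : ℝ)) (((l : ℝ) * T) / (L : ℝ)) -
              U ((((l : ℝ) + 1) * T) / (L : ℝ)) (((l : ℝ) * T) / (L : ℝ))‖ :=
            prod_diff_le _ _ (fun l => norm_Ug1_le hH1 hH2 _ _) hVnorm L
        _ ≤ ∑ l ∈ Finset.range L, e :=
            Finset.sum_le_sum (fun l hl => hloc l (Finset.mem_range.mp hl))
        _ = (L : ℝ) * e := by
            rw [Finset.sum_const, Finset.card_range, nsmul_eq_mul]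
    calc ‖trotterProd (Ug1 H1 H2 f1 f2) T L - U T 0‖ ≤ (L : ℝ) * e := hmain
      _ = (1/2) * F1 * F2 * C * T^2 / L := by
          rw [hedef]
          field_simp
end
end
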